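/- arXiv:1407.2725 — 4 statements merged into one kernel-verified Lean document; each statement's English description precedes it below -/
import Mathlib

section
/- Let B be a standard one-dimensional Brownian motion, λ > 0, and k ≥ 1 an integer. Set g_k(u) := u^k e^{−λu}/k!. Then almost surely the pathwise Wiener integral ∫₀ᵗ g_k(t−s) dB_s = ∫₀ᵗ [ (t−s)^{k−1}/(k−1)! − λ(t−s)^k/k! ] e^{−λ(t−s)} B_s ds is O(√(log t)); that is, limsup_{t→∞} |∫₀ᵗ g_k(t−s) dB_s| / √(log t) < ∞ almost surely. -/
set_option maxHeartbeats 1000000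

open MeasureTheory ProbabilityTheory Filter

structure IsStdBM1 {Ω : Type*} [MeasureSpace Ω] (B : ℝ → Ω → ℝ) : Prop where
  measurable : ∀ t : ℝ, Measurable (B t)
  cont : ∀ ω : Ω, Continuous fun t : ℝ => B t ω
  init : ∀ ω : Ω, B 0 ω = 0
  indep : ∀ (n : ℕ) (t : Fin (n + 1) → ℝ), 0 ≤ t 0 → Monotone t →
    iIndepFun
      (fun i : Fin n => fun ω => B (t i.succ) ω - B (t i.castSucc) ω) volume
  gauss : ∀ s t : ℝ, 0 ≤ s → s ≤ t →
    Measure.map (fun ω => B t ω - B s ω) volume = gaussianReal 0 (Real.toNNReal (t - s))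

namespace BMaux

/-! ### Numeric helpers -/

lemma L_pos (n : ℕ) : 0 < Real.log ((n : ℝ) + 2) := by
  apply Real.log_pos
  have := Nat.cast_nonneg (α := ℝ) n
  linarith

lemma sqrtL_ge (n : ℕ) : (4/5 : ℝ) ≤ Real.sqrt (Real.log ((n : ℝ) + 2)) := by
  have h2 : Real.log 2 ≤ Real.log ((n : ℝ) + 2) := by
    apply Real.log_le_log (by norm_num)
    have := Nat.cast_nonneg (α := ℝ) n
    linarith
  have hl2 : (16/25 : ℝ) ≤ Real.log 2 := by
    have := Real.log_two_gt_d9; linarith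
  have : (4/5 : ℝ) = Real.sqrt (16/25) := by
    rw [show (16/25 : ℝ) = (4/5)^2 by norm_num, Real.sqrt_sq (by norm_num)]
  rw [this]
  exact Real.sqrt_le_sqrt (by linarith)

lemma nat_le_geom : ∀ m : ℕ, (m : ℝ) ≤ (81/50)^m := by
  intro m
  induction m with
  | zero => norm_num
  | succ l ih =>
    rcases Nat.lt_or_ge l 2 with h | h
    · interval_cases l <;> norm_num
    · have h2 : (2:ℝ) ≤ l := by exact_mod_cast h
      have hpow : (0:ℝ) ≤ (81/50)^l := by positivity
      push_cast
      calc (l : ℝ) + 1 ≤ (81/50) * l := by linarith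
        _ ≤ (81/50) * (81/50)^l := by nlinarith
        _ = (81/50)^(l+1) := by ring

lemma sqrt_pow_le (m : ℕ) : Real.sqrt ((1:ℝ)/2^m) ≤ (9/10)^m := by
  have key : ((81:ℝ)/100)^m = (((9:ℝ)/10)^m)^2 := by
    rw [← pow_mul, pow_mul']
    norm_num
  have h9 : Real.sqrt (((81:ℝ)/100)^m) = ((9:ℝ)/10)^m := by
    rw [key, Real.sqrt_sq (by positivity)]
  rw [← h9]
  apply Real.sqrt_le_sqrt
  rw [show (1:ℝ)/2^m = ((1:ℝ)/2)^m by rw [div_pow]; norm_num]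
  exact pow_le_pow_left₀ (by norm_num) (by norm_num) m

lemma sqrt_mul_le (m : ℕ) : Real.sqrt ((1:ℝ)/2^m) * Real.sqrt m ≤ (9/10)^m := by
  have key : ((81:ℝ)/100)^m = (((9:ℝ)/10)^m)^2 := by
    rw [← pow_mul, pow_mul']
    norm_num
  have h9 : Real.sqrt (((81:ℝ)/100)^m) = ((9:ℝ)/10)^m := by
    rw [key, Real.sqrt_sq (by positivity)]
  rw [← Real.sqrt_mul (by positivity), ← h9]
  apply Real.sqrt_le_sqrt
  have := nat_le_geom m
  have h2m : (0:ℝ) < 2^m := by positivity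
  rw [div_mul_eq_mul_div, one_mul, div_le_iff₀ h2m]
  calc (m:ℝ) ≤ (81/50)^m := this
    _ = (81/100)^m * 2^m := by rw [← mul_pow]; norm_num

/-! ### Threshold -/

noncomputable def thr (n m : ℕ) : ℝ :=
  3 * Real.sqrt ((1:ℝ)/2^m) * (Real.sqrt m + Real.sqrt (Real.log ((n:ℝ)+2)))

lemma thr_pos (n m : ℕ) : 0 < thr n m := by
  unfold thr
  have h1 : (0:ℝ) < Real.sqrt ((1:ℝ)/2^m) := Real.sqrt_pos.mpr (by positivity)
  have h2 : (0:ℝ) < Real.sqrt (Real.log ((n:ℝ)+2)) := Real.sqrt_pos.mpr (L_pos n)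
  have h3 : (0:ℝ) ≤ Real.sqrt (m:ℝ) := Real.sqrt_nonneg _
  nlinarith

lemma thr_le (n m : ℕ) :
    thr n m ≤ 3 * (9/10)^m * (1 + Real.sqrt (Real.log ((n:ℝ)+2))) := by
  unfold thr
  have h1 := sqrt_mul_le m
  have h2 := sqrt_pow_le m
  have hL := Real.sqrt_nonneg (Real.log ((n:ℝ)+2))
  have h3 := mul_le_mul_of_nonneg_right h2 hL
  nlinarith [Real.sqrt_nonneg ((1:ℝ)/2^m), Real.sqrt_nonneg (m:ℝ)]

/-! ### Gaussian tail bound -/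

lemma gaussian_tail {v : NNReal} (hv : v ≠ 0) {a : ℝ} (ha : 0 < a) :
    gaussianReal 0 v {x | a ≤ |x|} ≤ ENNReal.ofReal (3 * Real.exp (-a^2 / (4*v))) := by
  have hvpos : (0:ℝ) < v := by
    exact_mod_cast zero_lt_iff.mpr hv
  rw [gaussianReal_apply_eq_integral 0 hv]
  apply ENNReal.ofReal_le_ofReal
  set s : Set ℝ := {x | a ≤ |x|} with hs
  have hsm : MeasurableSet s := (isClosed_le continuous_const continuous_abs).measurableSet
  set c : ℝ := (Real.sqrt (2*Real.pi*v))⁻¹ with hc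
  have hcpos : 0 < c := by
    rw [hc]
    apply inv_pos.mpr
    apply Real.sqrt_pos.mpr
    positivity
  set g : ℝ → ℝ := fun x => Real.exp (-a^2/(4*v)) * (c * Real.exp (-(4*(v:ℝ))⁻¹ * x^2)) with hg
  have hgint : Integrable g := by
    apply Integrable.const_mul
    exact (integrable_exp_neg_mul_sq (by positivity)).const_mul c
  have hkey : ∀ x ∈ s, gaussianPDFReal 0 v x ≤ g x := by
    intro x hx
    have hax : a^2 ≤ x^2 := by
      have : a ≤ |x| := hx
      calc a^2 ≤ |x|^2 := by nlinarith [abs_nonneg x]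
        _ = x^2 := sq_abs x
    rw [gaussianPDFReal, hg]
    have hexp : Real.exp (-(x - 0)^2 / (2*(v:ℝ))) ≤
        Real.exp (-a^2/(4*(v:ℝ))) * Real.exp (-(4*(v:ℝ))⁻¹ * x^2) := by
      rw [← Real.exp_add]
      apply Real.exp_le_exp.mpr
      have h4v : (0:ℝ) < 4*(v:ℝ) := by positivity
      have e1 : -(4*(v:ℝ))⁻¹ * x^2 = -x^2/(4*(v:ℝ)) := by ring
      have e2 : -(x - 0)^2 / (2*(v:ℝ)) = -x^2/(4*(v:ℝ)) + -x^2/(4*(v:ℝ)) := by ring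
      rw [e1, e2]
      have h3 : -x^2/(4*(v:ℝ)) ≤ -a^2/(4*(v:ℝ)) := by
        apply (div_le_div_iff_of_pos_right h4v).mpr
        linarith
      linarith
    calc c * Real.exp (-(x - 0)^2 / (2*(v:ℝ)))
        ≤ c * (Real.exp (-a^2/(4*(v:ℝ))) * Real.exp (-(4*(v:ℝ))⁻¹ * x^2)) := by
          apply mul_le_mul_of_nonneg_left hexp hcpos.le
      _ = Real.exp (-a^2/(4*(v:ℝ))) * (c * Real.exp (-(4*(v:ℝ))⁻¹ * x^2)) := by ring
  calc ∫ x in s, gaussianPDFReal 0 v x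
      ≤ ∫ x in s, g x :=
        setIntegral_mono_on ((integrable_gaussianPDFReal 0 v).restrict) hgint.restrict hsm hkey
    _ ≤ ∫ x, g x := setIntegral_le_integral hgint (ae_of_all _ (fun x => by positivity))
    _ = Real.exp (-a^2/(4*(v:ℝ))) * (c * Real.sqrt (Real.pi / (4*(v:ℝ))⁻¹)) := by
        simp only [hg]
        rw [integral_const_mul, integral_const_mul, integral_gaussian]
    _ ≤ 3 * Real.exp (-a^2 / (4*(v:ℝ))) := by
        have hπ : Real.pi / (4*(v:ℝ))⁻¹ = 2 * (2*Real.pi*(v:ℝ)) := by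
          field_simp; ring
        rw [hπ, Real.sqrt_mul (by norm_num)]
        have hne : Real.sqrt (2*Real.pi*(v:ℝ)) ≠ 0 := by
          apply ne_of_gt; apply Real.sqrt_pos.mpr; positivity
        rw [hc]
        rw [show (Real.sqrt (2*Real.pi*(v:ℝ)))⁻¹ * (Real.sqrt 2 * Real.sqrt (2*Real.pi*(v:ℝ)))
            = Real.sqrt 2 by field_simp]
        have h2 : Real.sqrt 2 ≤ 3 := by
          nlinarith [Real.sq_sqrt (by norm_num : (0:ℝ) ≤ 2), Real.sqrt_nonneg 2]
        nlinarith [Real.exp_pos (-a^2/(4*(v:ℝ)))]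


/-! ### Increment tail bound and events -/

variable {Ω : Type*} [MeasureSpace Ω] [IsProbabilityMeasure (volume : Measure Ω)]

lemma incr_tail {B : ℝ → Ω → ℝ} (hB : IsStdBM1 B) {p q a : ℝ}
    (hp : 0 ≤ p) (hpq : p < q) (ha : 0 < a) :
    volume {ω : Ω | a ≤ |B q ω - B p ω|} ≤
      ENNReal.ofReal (3 * Real.exp (-a^2 / (4*(q-p)))) := by
  have hmeas : Measurable (fun ω => B q ω - B p ω) :=
    (hB.measurable q).sub (hB.measurable p)
  have hsm : MeasurableSet {x : ℝ | a ≤ |x|} :=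
    (isClosed_le continuous_const continuous_abs).measurableSet
  have hset : {ω : Ω | a ≤ |B q ω - B p ω|}
      = (fun ω => B q ω - B p ω) ⁻¹' {x : ℝ | a ≤ |x|} := rfl
  rw [hset, ← Measure.map_apply hmeas hsm, hB.gauss p q hp hpq.le]
  have hv : (q - p).toNNReal ≠ 0 := by
    simp only [ne_eq, Real.toNNReal_eq_zero, not_le]
    linarith
  have hcoe : ((q - p).toNNReal : ℝ) = q - p := Real.coe_toNNReal _ (by linarith)
  calc gaussianReal 0 (q-p).toNNReal {x : ℝ | a ≤ |x|}
      ≤ ENNReal.ofReal (3 * Real.exp (-a^2 / (4*((q-p).toNNReal : ℝ)))) :=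
        gaussian_tail hv ha
    _ = ENNReal.ofReal (3 * Real.exp (-a^2 / (4*(q-p)))) := by rw [hcoe]


/-- The bad event at scale `m`, position `j`, in the interval `[n, n+1]`. -/
def Ev (B : ℝ → Ω → ℝ) (n m j : ℕ) : Set Ω :=
  {ω : Ω | thr n m ≤ |B ((n:ℝ) + ((j:ℝ)+1)/2^m) ω - B ((n:ℝ) + (j:ℝ)/2^m) ω|}

lemma Ev_le {B : ℝ → Ω → ℝ} (hB : IsStdBM1 B) (n m j : ℕ) :
    volume (Ev B n m j) ≤
      ENNReal.ofReal ((3 * Real.exp (-2*(m:ℝ))) * (((n:ℝ)+2)^2)⁻¹) := by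
  have h2m : (0:ℝ) < 2^m := by positivity
  have hp : (0:ℝ) ≤ (n:ℝ) + (j:ℝ)/2^m := by positivity
  have hpq : (n:ℝ) + (j:ℝ)/2^m < (n:ℝ) + ((j:ℝ)+1)/2^m := by
    have h : (j:ℝ)/2^m < ((j:ℝ)+1)/2^m := by gcongr <;> linarith
    linarith
  have hd : ((n:ℝ) + ((j:ℝ)+1)/2^m) - ((n:ℝ) + (j:ℝ)/2^m) = 1/2^m := by ring
  have step1 := incr_tail hB hp hpq (thr_pos n m)
  rw [hd] at step1
  refine step1.trans (ENNReal.ofReal_le_ofReal ?_)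
  have hL := (L_pos n).le
  set L := Real.log ((n:ℝ)+2) with hLdef
  have hsm : Real.sqrt (m:ℝ)^2 = (m:ℝ) := Real.sq_sqrt (Nat.cast_nonneg m)
  have hsL : Real.sqrt L^2 = L := Real.sq_sqrt hL
  have hs2 : Real.sqrt ((1:ℝ)/2^m)^2 = 1/2^m := Real.sq_sqrt (by positivity)
  have hexp_arg : -(thr n m)^2/(4*((1:ℝ)/2^m)) ≤ -(2*(m:ℝ) + 2*L) := by
    unfold thr
    have expand : (3 * Real.sqrt ((1:ℝ)/2^m) * (Real.sqrt (m:ℝ) + Real.sqrt L))^2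
        = 9 * ((1:ℝ)/2^m) * (Real.sqrt (m:ℝ) + Real.sqrt L)^2 := by
      rw [mul_pow, mul_pow, hs2]; norm_num
    rw [← hLdef, expand]
    have heq : -(9 * ((1:ℝ)/2^m) * (Real.sqrt (m:ℝ) + Real.sqrt L)^2)/(4*((1:ℝ)/2^m))
        = -(9/4) * (Real.sqrt (m:ℝ) + Real.sqrt L)^2 := by
      field_simp
    rw [heq]
    nlinarith [mul_nonneg (Real.sqrt_nonneg (m:ℝ)) (Real.sqrt_nonneg L),
      Nat.cast_nonneg (α := ℝ) m]
  have hE : Real.exp (-(2*(m:ℝ)+2*L)) = Real.exp (-2*(m:ℝ)) * (((n:ℝ)+2)^2)⁻¹ := by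
    rw [show -(2*(m:ℝ)+2*L) = -2*(m:ℝ) + -(L+L) by ring, Real.exp_add]
    congr 1
    rw [Real.exp_neg, Real.exp_add, Real.exp_log (by positivity), sq]
  calc 3 * Real.exp (-(thr n m)^2/(4*((1:ℝ)/2^m)))
      ≤ 3 * Real.exp (-(2*(m:ℝ)+2*L)) := by
        have := Real.exp_le_exp.mpr hexp_arg; linarith
    _ = (3 * Real.exp (-2*(m:ℝ))) * (((n:ℝ)+2)^2)⁻¹ := by rw [hE]; ring

/-- Union of all bad events in `[n, n+1]`. -/
def bad (B : ℝ → Ω → ℝ) (n : ℕ) : Set Ω :=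
  ⋃ m : ℕ, ⋃ j ∈ Finset.range (2^m), Ev B n m j

lemma r_lt : (0:ℝ) ≤ 2*Real.exp (-2) ∧ 2*Real.exp (-2) ≤ 1/2 := by
  constructor
  · positivity
  · have h1 : (2:ℝ) ≤ Real.exp 1 := by
      have := Real.add_one_le_exp (1:ℝ); linarith
    have h2 : (4:ℝ) ≤ Real.exp 2 := by
      have : Real.exp 2 = Real.exp 1 * Real.exp 1 := by
        rw [← Real.exp_add]; norm_num
      nlinarith
    have h3 : Real.exp (-2) = (Real.exp 2)⁻¹ := Real.exp_neg 2
    rw [h3]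
    have h4 : (Real.exp 2)⁻¹ ≤ (4:ℝ)⁻¹ := by
      apply inv_anti₀ (by norm_num) h2
    linarith

lemma bad_le {B : ℝ → Ω → ℝ} (hB : IsStdBM1 B) (n : ℕ) :
    volume (bad B n) ≤ ENNReal.ofReal (6 * (((n:ℝ)+2)^2)⁻¹) := by
  set c : ℝ := (((n:ℝ)+2)^2)⁻¹ with hcdef
  have hc : 0 ≤ c := by positivity
  have hform : ∀ m : ℕ, (2:ℝ)^m * (3 * Real.exp (-2*(m:ℝ))) * c
      = (3*c) * (2*Real.exp (-2))^m := by
    intro m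
    have hx : Real.exp (-2*(m:ℝ)) = Real.exp (-2)^m := by
      rw [← Real.exp_nat_mul]; congr 1; ring
    rw [hx, mul_pow]
    ring
  have hsummable : Summable (fun m : ℕ => (2:ℝ)^m * (3 * Real.exp (-2*(m:ℝ))) * c) := by
    apply Summable.congr (f := fun m : ℕ => (3*c) * (2*Real.exp (-2))^m)
    · exact (summable_geometric_of_lt_one r_lt.1 (by linarith [r_lt.2])).mul_left _
    · intro m; rw [hform m]
  have h2 : ∀ m : ℕ, volume (⋃ j ∈ Finset.range (2^m), Ev B n m j)
      ≤ ENNReal.ofReal ((2:ℝ)^m * (3 * Real.exp (-2*(m:ℝ))) * c) := by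
    intro m
    calc volume (⋃ j ∈ Finset.range (2^m), Ev B n m j)
        ≤ ∑ j ∈ Finset.range (2^m), volume (Ev B n m j) := measure_biUnion_finset_le _ _
      _ ≤ ∑ _j ∈ Finset.range (2^m), ENNReal.ofReal ((3 * Real.exp (-2*(m:ℝ))) * c) :=
          Finset.sum_le_sum (fun j _ => Ev_le hB n m j)
      _ = (2^m : ℕ) • ENNReal.ofReal ((3 * Real.exp (-2*(m:ℝ))) * c) := by
          rw [Finset.sum_const, Finset.card_range]
      _ = ENNReal.ofReal ((2:ℝ)^m * (3 * Real.exp (-2*(m:ℝ))) * c) := by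
          rw [nsmul_eq_mul, ← ENNReal.ofReal_natCast (2^m),
            ← ENNReal.ofReal_mul (by positivity)]
          congr 1
          push_cast
          ring
  have htsum : (∑' m : ℕ, (2:ℝ)^m * (3 * Real.exp (-2*(m:ℝ))) * c) ≤ 6 * c := by
    have heq : (∑' m : ℕ, (2:ℝ)^m * (3 * Real.exp (-2*(m:ℝ))) * c)
        = (3*c) * (1 - 2*Real.exp (-2))⁻¹ := by
      rw [tsum_congr hform, tsum_mul_left,
        tsum_geometric_of_lt_one r_lt.1 (by linarith [r_lt.2])]
    rw [heq]
    have hinv : (1 - 2*Real.exp (-2))⁻¹ ≤ 2 := by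
      have h5 : (1/2 : ℝ) ≤ 1 - 2*Real.exp (-2) := by linarith [r_lt.2]
      calc (1 - 2*Real.exp (-2))⁻¹ ≤ (1/2:ℝ)⁻¹ := by
            apply inv_anti₀ (by norm_num) h5
        _ = 2 := by norm_num
    nlinarith
  calc volume (bad B n)
      ≤ ∑' m : ℕ, volume (⋃ j ∈ Finset.range (2^m), Ev B n m j) := measure_iUnion_le _
    _ ≤ ∑' m : ℕ, ENNReal.ofReal ((2:ℝ)^m * (3 * Real.exp (-2*(m:ℝ))) * c) :=
        ENNReal.tsum_le_tsum h2
    _ = ENNReal.ofReal (∑' m : ℕ, (2:ℝ)^m * (3 * Real.exp (-2*(m:ℝ))) * c) :=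
        (ENNReal.ofReal_tsum_of_nonneg (fun m => by positivity) hsummable).symm
    _ ≤ ENNReal.ofReal (6 * c) := ENNReal.ofReal_le_ofReal htsum

lemma bc {B : ℝ → Ω → ℝ} (hB : IsStdBM1 B) :
    ∀ᵐ ω ∂(volume : Measure Ω), ∀ᶠ n in atTop, ω ∉ bad B n := by
  apply ae_eventually_notMem
  have hsum : Summable (fun n : ℕ => 6 * (((n:ℝ)+2)^2)⁻¹) := by
    have h0 : Summable (fun n : ℕ => 1 / (n:ℝ)^2) :=
      Real.summable_one_div_nat_pow.mpr one_lt_two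
    have h1 : Summable (fun n : ℕ => 1 / ((n+2:ℕ):ℝ)^2) :=
      (summable_nat_add_iff 2).mpr h0
    apply Summable.congr (h1.mul_left 6)
    intro n
    push_cast
    field_simp
  apply ne_top_of_le_ne_top (b := ENNReal.ofReal (∑' n : ℕ, 6 * (((n:ℝ)+2)^2)⁻¹))
    ENNReal.ofReal_ne_top
  calc ∑' n, volume (bad B n)
      ≤ ∑' n : ℕ, ENNReal.ofReal (6 * (((n:ℝ)+2)^2)⁻¹) :=
        ENNReal.tsum_le_tsum (fun n => bad_le hB n)
    _ = ENNReal.ofReal (∑' n : ℕ, 6 * (((n:ℝ)+2)^2)⁻¹) :=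
        (ENNReal.ofReal_tsum_of_nonneg (fun n => by positivity) hsum).symm


/-! ### Dyadic approximation -/

noncomputable def aseq (x : ℝ) (l : ℕ) : ℕ := ⌊x * 2^l⌋₊

lemma aseq_le {x : ℝ} (hx0 : 0 ≤ x) (l : ℕ) : (aseq x l : ℝ) ≤ x * 2^l :=
  Nat.floor_le (by positivity)

lemma aseq_gt (x : ℝ) (l : ℕ) : x * 2^l < (aseq x l : ℝ) + 1 :=
  Nat.lt_floor_add_one _

lemma aseq_lt {x : ℝ} (hx0 : 0 ≤ x) (hx1 : x < 1) (l : ℕ) : aseq x l < 2^l := by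
  rw [aseq, Nat.floor_lt (by positivity)]
  push_cast
  nlinarith [pow_pos (show (0:ℝ) < 2 by norm_num) l]

lemma aseq_zero {x : ℝ} (hx0 : 0 ≤ x) (hx1 : x < 1) : aseq x 0 = 0 := by
  rw [aseq, Nat.floor_eq_zero]
  rw [pow_zero, mul_one]
  exact hx1

lemma aseq_succ {x : ℝ} (hx0 : 0 ≤ x) (l : ℕ) :
    aseq x (l+1) = 2 * aseq x l ∨ aseq x (l+1) = 2 * aseq x l + 1 := by
  have hlow : 2 * aseq x l ≤ aseq x (l+1) := by
    rw [aseq, aseq]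
    apply Nat.le_floor
    push_cast
    have h1 := aseq_le hx0 l
    rw [aseq] at h1
    calc (2:ℝ) * ⌊x * 2^l⌋₊ ≤ 2 * (x * 2^l) := by linarith
      _ = x * 2^(l+1) := by ring
  have hhigh : aseq x (l+1) < 2 * aseq x l + 2 := by
    rw [aseq, aseq, Nat.floor_lt (by positivity)]
    push_cast
    have h2 := aseq_gt x l
    rw [aseq] at h2
    calc x * 2^(l+1) = 2 * (x * 2^l) := by ring
      _ < 2 * ((⌊x * 2^l⌋₊ : ℝ) + 1) := by linarith
      _ = 2 * (⌊x * 2^l⌋₊:ℝ) + 2 := by ring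

  omega

noncomputable def ptseq (n : ℕ) (x : ℝ) (l : ℕ) : ℝ := (n:ℝ) + (aseq x l : ℝ)/2^l

lemma ptseq_zero {n : ℕ} {x : ℝ} (hx0 : 0 ≤ x) (hx1 : x < 1) : ptseq n x 0 = (n:ℝ) := by
  rw [ptseq, aseq_zero hx0 hx1]
  norm_num

lemma ptseq_tendsto {n : ℕ} {x : ℝ} (hx0 : 0 ≤ x) :
    Filter.Tendsto (ptseq n x) atTop (nhds ((n:ℝ) + x)) := by
  have htend : Filter.Tendsto (fun l => (aseq x l : ℝ)/2^l) atTop (nhds x) := by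
    apply tendsto_of_tendsto_of_tendsto_of_le_of_le
      (g := fun l => x - ((1:ℝ)/2)^l) (h := fun _ => x)
    · have h1 := tendsto_pow_atTop_nhds_zero_of_lt_one
        (show (0:ℝ) ≤ 1/2 by norm_num) (show (1:ℝ)/2 < 1 by norm_num)
      have h2 := (tendsto_const_nhds (x := x) (f := atTop)).sub h1
      simpa using h2
    · exact tendsto_const_nhds
    · intro l
      have h2l : (0:ℝ) < 2^l := by positivity
      have hhi := aseq_gt x l
      have heq : ((1:ℝ)/2)^l = 1/2^l := by rw [div_pow]; norm_num
      show x - ((1:ℝ)/2)^l ≤ (aseq x l : ℝ)/2^l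
      rw [heq, sub_le_iff_le_add, ← add_div, le_div_iff₀ h2l]
      linarith
    · intro l
      have h2l : (0:ℝ) < 2^l := by positivity
      show (aseq x l : ℝ)/2^l ≤ x
      rw [div_le_iff₀ h2l]
      exact aseq_le hx0 l
  have := tendsto_const_nhds (x := (n:ℝ)) (f := (atTop : Filter ℕ))  |>.add htend
  exact this

/-! ### The chaining lemma -/

lemma chain {B : ℝ → Ω → ℝ} (hB : IsStdBM1 B) {ω : Ω} {n : ℕ} (h : ω ∉ bad B n) :
    ∀ t ∈ Set.Icc (n:ℝ) ((n:ℝ)+1),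
      |B t ω - B (n:ℝ) ω| ≤ 27 * (1 + Real.sqrt (Real.log ((n:ℝ)+2))) := by
  have hE : ∀ m j : ℕ, j < 2^m →
      |B ((n:ℝ) + ((j:ℝ)+1)/2^m) ω - B ((n:ℝ) + (j:ℝ)/2^m) ω| < thr n m := by
    intro m j hj
    by_contra hcon
    push_neg at hcon
    exact h (Set.mem_iUnion.mpr ⟨m, Set.mem_iUnion₂.mpr ⟨j, Finset.mem_range.mpr hj, hcon⟩⟩)
  set L := Real.sqrt (Real.log ((n:ℝ)+2)) with hLdef
  have hL0 : 0 ≤ L := Real.sqrt_nonneg _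
  have hthr : ∀ m : ℕ, thr n m ≤ 3 * (9/10:ℝ)^m * (1 + L) := fun m => thr_le n m
  intro t ht
  obtain ⟨ht1, ht2⟩ := ht
  rcases eq_or_lt_of_le ht2 with heq | hlt
  · -- t = n + 1 exactly
    have h0 := hE 0 0 (by norm_num)
    have e1 : (n:ℝ) + (((0:ℕ):ℝ)+1)/2^0 = (n:ℝ)+1 := by norm_num
    have e2 : (n:ℝ) + ((0:ℕ):ℝ)/2^0 = (n:ℝ) := by norm_num
    rw [e1, e2] at h0
    rw [heq]
    have h27 : thr n 0 ≤ 27 * (1 + L) := by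
      have := hthr 0
      nlinarith
    exact h0.le.trans h27
  · set x := t - (n:ℝ) with hxdef
    have hx0 : 0 ≤ x := by rw [hxdef]; linarith
    have hx1 : x < 1 := by rw [hxdef]; linarith
    have hstep : ∀ l : ℕ,
        |B (ptseq n x (l+1)) ω - B (ptseq n x l) ω| ≤ 3 * (9/10:ℝ)^(l+1) * (1+L) := by
      intro l
      rcases aseq_succ hx0 l with hc | hc
      · have heq2 : ptseq n x (l+1) = ptseq n x l := by
          rw [ptseq, ptseq, hc]
          push_cast
          field_simp
          ring
        rw [heq2, sub_self, abs_zero]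
        positivity
      · have hjlt : 2 * aseq x l < 2^(l+1) := by
          have h4 := aseq_lt hx0 hx1 l
          have h5 : (2:ℕ)^(l+1) = 2 * 2^l := by rw [pow_succ]; ring
          omega
        have hme := hE (l+1) (2 * aseq x l) hjlt
        have e1 : (n:ℝ) + (((2 * aseq x l : ℕ):ℝ))/2^(l+1) = ptseq n x l := by
          rw [ptseq]
          push_cast
          field_simp
          ring
        have e2 : (n:ℝ) + (((2 * aseq x l : ℕ):ℝ)+1)/2^(l+1) = ptseq n x (l+1) := by
          rw [ptseq, hc]
          push_cast
          ring
        rw [e1, e2] at hme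
        exact hme.le.trans (hthr (l+1))
    have hpartial : ∀ m : ℕ, |B (ptseq n x m) ω - B (n:ℝ) ω| ≤
        ∑ l ∈ Finset.range m, 3 * (9/10:ℝ)^(l+1) * (1+L) := by
      intro m
      induction m with
      | zero =>
        rw [ptseq_zero hx0 hx1]
        simp
      | succ p ih =>
        rw [Finset.sum_range_succ]
        have htri : |B (ptseq n x (p+1)) ω - B (n:ℝ) ω|
            ≤ |B (ptseq n x (p+1)) ω - B (ptseq n x p) ω| + |B (ptseq n x p) ω - B (n:ℝ) ω| :=
          abs_sub_le _ _ _
        have := add_le_add (hstep p) ih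
        linarith
    have hsumle : ∀ m : ℕ, (∑ l ∈ Finset.range m, 3 * (9/10:ℝ)^(l+1) * (1+L)) ≤ 27 * (1+L) := by
      intro m
      have h1 : (∑ l ∈ Finset.range m, 3 * (9/10:ℝ)^(l+1) * (1+L))
          = (3 * (9/10) * (1+L)) * ∑ l ∈ Finset.range m, (9/10:ℝ)^l := by
        rw [Finset.mul_sum]
        apply Finset.sum_congr rfl
        intro l _
        rw [pow_succ]
        ring
      rw [h1, geom_sum_eq (by norm_num : (9/10:ℝ) ≠ 1)]
      have hpow : (0:ℝ) ≤ (9/10:ℝ)^m := by positivity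
      have hpow1 : (9/10:ℝ)^m ≤ 1 := pow_le_one₀ (by norm_num) (by norm_num)
      have hq : ((9/10:ℝ)^m - 1)/((9/10:ℝ) - 1) ≤ 10 := by
        rw [div_le_iff_of_neg (by norm_num)]
        linarith
      nlinarith
    have hptt : Filter.Tendsto (ptseq n x) atTop (nhds t) := by
      have h1 := ptseq_tendsto (n := n) hx0
      have hx : (n:ℝ) + x = t := by rw [hxdef]; ring
      rwa [hx] at h1
    have hBt : Filter.Tendsto (fun m => |B (ptseq n x m) ω - B (n:ℝ) ω|) atTop
        (nhds (|B t ω - B (n:ℝ) ω|)) := by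
      have h1 : Filter.Tendsto (fun m => B (ptseq n x m) ω) atTop (nhds (B t ω)) :=
        ((hB.cont ω).tendsto t).comp hptt
      exact (h1.sub_const _).abs
    apply le_of_tendsto hBt
    filter_upwards with m
    exact (hpartial m).trans (hsumle m)


/-! ### Almost-sure unit interval bound -/

lemma unit_bound {B : ℝ → Ω → ℝ} (hB : IsStdBM1 B) :
    ∀ᵐ ω ∂(volume : Measure Ω), ∃ C : ℝ, 1 ≤ C ∧ ∀ n : ℕ, ∀ t ∈ Set.Icc (n:ℝ) ((n:ℝ)+1),
      |B t ω - B (n:ℝ) ω| ≤ C * Real.sqrt (Real.log ((n:ℝ)+2)) := by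
  filter_upwards [bc hB] with ω hω
  obtain ⟨N, hN⟩ := eventually_atTop.mp hω
  obtain ⟨M, hM⟩ : ∃ M : ℝ, ∀ s ∈ Set.Icc (0:ℝ) ((N:ℝ)+1), |B s ω| ≤ M := by
    obtain ⟨M, hM⟩ := (isCompact_Icc (a := (0:ℝ)) (b := (N:ℝ)+1)).exists_bound_of_continuousOn
      (f := fun s => B s ω) ((hB.cont ω).continuousOn)
    exact ⟨M, fun s hs => by simpa [Real.norm_eq_abs] using hM s hs⟩
  refine ⟨61 + 3 * |M|, by linarith [abs_nonneg M], ?_⟩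
  intro n t ht
  have hLn : (4/5:ℝ) ≤ Real.sqrt (Real.log ((n:ℝ)+2)) := sqrtL_ge n
  have hM0 : 0 ≤ |M| := abs_nonneg M
  by_cases hn : N ≤ n
  · have hchain := chain hB (hN n hn) t ht
    have hL0 : 0 ≤ Real.sqrt (Real.log ((n:ℝ)+2)) := Real.sqrt_nonneg _
    calc |B t ω - B (n:ℝ) ω| ≤ 27 * (1 + Real.sqrt (Real.log ((n:ℝ)+2))) := hchain
      _ ≤ 61 * Real.sqrt (Real.log ((n:ℝ)+2)) := by nlinarith
      _ ≤ (61 + 3*|M|) * Real.sqrt (Real.log ((n:ℝ)+2)) := by nlinarith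
  · push_neg at hn
    have hnN : (n:ℝ) + 1 ≤ (N:ℝ) + 1 := by
      have : (n:ℝ) + 1 ≤ (N:ℝ) := by exact_mod_cast hn
      linarith
    have ht0 : t ∈ Set.Icc (0:ℝ) ((N:ℝ)+1) := by
      obtain ⟨h1, h2⟩ := ht
      constructor
      · have : (0:ℝ) ≤ (n:ℝ) := Nat.cast_nonneg n
        linarith
      · linarith
    have hn0 : (n:ℝ) ∈ Set.Icc (0:ℝ) ((N:ℝ)+1) := by
      constructor
      · exact Nat.cast_nonneg n
      · have h1 := ht.1
        have h2 := ht.2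
        linarith [ht0.2]
    have h1 := hM t ht0
    have h2 := hM (n:ℝ) hn0
    have hMle : M ≤ |M| := le_abs_self M
    calc |B t ω - B (n:ℝ) ω| ≤ |B t ω| + |B (n:ℝ) ω| := abs_sub _ _
      _ ≤ 2 * |M| := by linarith
      _ ≤ (61 + 3*|M|) * (4/5) := by nlinarith
      _ ≤ (61 + 3*|M|) * Real.sqrt (Real.log ((n:ℝ)+2)) := by nlinarith

/-! ### Global pairwise bound (deterministic per path) -/

lemma pair_bound {B : ℝ → Ω → ℝ} {ω : Ω} {C : ℝ} (hC1 : 1 ≤ C)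
    (h : ∀ n : ℕ, ∀ t ∈ Set.Icc (n:ℝ) ((n:ℝ)+1),
      |B t ω - B (n:ℝ) ω| ≤ C * Real.sqrt (Real.log ((n:ℝ)+2)))
    {s t : ℝ} (hs : 0 ≤ s) (hst : s ≤ t) :
    |B s ω - B t ω| ≤ C * (t - s + 3) * Real.sqrt (Real.log (t+2)) := by
  have h0t : 0 ≤ t := hs.trans hst
  set m := ⌊s⌋₊ with hmdef
  set n := ⌊t⌋₊ with hndef
  have hmn : m ≤ n := Nat.floor_mono hst
  have hnt : (n:ℝ) ≤ t := Nat.floor_le h0t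
  have hms : (m:ℝ) ≤ s := Nat.floor_le hs
  have hsm1 : s < (m:ℝ) + 1 := Nat.lt_floor_add_one s
  have htn1 : t < (n:ℝ) + 1 := Nat.lt_floor_add_one t
  have hC0 : 0 ≤ C := by linarith
  set R := Real.sqrt (Real.log (t+2)) with hRdef
  have hR0 : 0 ≤ R := Real.sqrt_nonneg _
  have hmono : ∀ p : ℕ, (p:ℝ) ≤ t → Real.sqrt (Real.log ((p:ℝ)+2)) ≤ R := by
    intro p hp
    apply Real.sqrt_le_sqrt
    apply Real.log_le_log (by positivity)
    linarith
  -- single-interval bounds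
  have b1 : |B s ω - B (m:ℝ) ω| ≤ C * R := by
    have := h m s ⟨hms, hsm1.le⟩
    have h2 := hmono m (hms.trans hst)
    calc |B s ω - B (m:ℝ) ω| ≤ C * Real.sqrt (Real.log ((m:ℝ)+2)) := this
      _ ≤ C * R := by nlinarith [Real.sqrt_nonneg (Real.log ((m:ℝ)+2))]
  have b2 : |B t ω - B (n:ℝ) ω| ≤ C * R := by
    have := h n t ⟨hnt, htn1.le⟩
    have h2 := hmono n hnt
    calc |B t ω - B (n:ℝ) ω| ≤ C * Real.sqrt (Real.log ((n:ℝ)+2)) := this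
      _ ≤ C * R := by nlinarith [Real.sqrt_nonneg (Real.log ((n:ℝ)+2))]
  -- telescoping bound
  have b3 : |B (n:ℝ) ω - B (m:ℝ) ω| ≤ ((n:ℝ) - m) * (C * R) := by
    have htel : B (n:ℝ) ω - B (m:ℝ) ω
        = ∑ j ∈ Finset.Ico m n, (B ((j+1 : ℕ):ℝ) ω - B ((j:ℕ):ℝ) ω) := by
      rw [Finset.sum_Ico_eq_sub _ hmn, Finset.sum_range_sub (fun j => B ((j:ℕ):ℝ) ω),
        Finset.sum_range_sub (fun j => B ((j:ℕ):ℝ) ω)]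
      ring
    rw [htel]
    calc |∑ j ∈ Finset.Ico m n, (B ((j+1 : ℕ):ℝ) ω - B ((j:ℕ):ℝ) ω)|
        ≤ ∑ j ∈ Finset.Ico m n, |B ((j+1 : ℕ):ℝ) ω - B ((j:ℕ):ℝ) ω| :=
          Finset.abs_sum_le_sum_abs _ _
      _ ≤ ∑ _j ∈ Finset.Ico m n, C * R := by
          apply Finset.sum_le_sum
          intro j hj
          obtain ⟨hj1, hj2⟩ := Finset.mem_Ico.mp hj
          have hjt : ((j:ℕ):ℝ) ≤ t := by
            have : (j:ℝ) < (n:ℝ) := by exact_mod_cast hj2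
            linarith
          have hstep := h j ((j+1:ℕ):ℝ) (by
            constructor
            · push_cast; linarith
            · push_cast; linarith)
          have h2 := hmono j hjt
          push_cast at hstep ⊢
          calc |B ((j:ℝ)+1) ω - B (j:ℝ) ω| ≤ C * Real.sqrt (Real.log ((j:ℝ)+2)) := hstep
            _ ≤ C * R := by nlinarith [Real.sqrt_nonneg (Real.log ((j:ℝ)+2))]
      _ = ((n - m : ℕ):ℝ) * (C * R) := by
          rw [Finset.sum_const, Nat.card_Ico, nsmul_eq_mul]
      _ = ((n:ℝ) - m) * (C * R) := by
          rw [Nat.cast_sub hmn]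
  -- combine
  have htri : |B s ω - B t ω| ≤ |B s ω - B (m:ℝ) ω| + |B (n:ℝ) ω - B (m:ℝ) ω|
      + |B t ω - B (n:ℝ) ω| := by
    have h1 : |B s ω - B t ω| ≤ |B s ω - B (m:ℝ) ω| + |B (m:ℝ) ω - B t ω| :=
      abs_sub_le _ _ _
    have h2 : |B (m:ℝ) ω - B t ω| ≤ |B (m:ℝ) ω - B (n:ℝ) ω| + |B (n:ℝ) ω - B t ω| :=
      abs_sub_le _ _ _
    rw [abs_sub_comm (B (m:ℝ) ω) (B (n:ℝ) ω), abs_sub_comm (B (n:ℝ) ω) (B t ω)] at h2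
    linarith
  have hcount : (n:ℝ) - m ≤ t - s + 1 := by linarith
  calc |B s ω - B t ω| ≤ C*R + ((n:ℝ) - m) * (C*R) + C*R := by linarith
    _ ≤ C*R + (t - s + 1) * (C*R) + C*R := by nlinarith [mul_nonneg hC0 hR0]
    _ = C * (t - s + 3) * R := by ring


/-! ### Kernel estimates -/

noncomputable def hker (lam : ℝ) (k : ℕ) (u : ℝ) : ℝ :=
  (u ^ (k - 1) / ((k-1).factorial : ℝ) - lam * u ^ k / (k.factorial : ℝ)) * Real.exp (-lam * u)

noncomputable def Fc (lam : ℝ) (j : ℕ) : ℝ := (j.factorial : ℝ) * (2/lam)^j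

noncomputable def Ac (lam : ℝ) (k : ℕ) : ℝ :=
  (Fc lam k + 3 * Fc lam (k-1)) / (((k-1).factorial : ℝ))
    + lam * ((Fc lam (k+1) + 3 * Fc lam k) / ((k.factorial : ℝ)))

noncomputable def Ac' (lam : ℝ) (k : ℕ) : ℝ :=
  (Fc lam (k+1) + 3 * Fc lam k) / ((k.factorial : ℝ))

lemma Fc_pos {lam : ℝ} (hlam : 0 < lam) (j : ℕ) : 0 < Fc lam j := by
  have : (0:ℝ) < (j.factorial : ℝ) := by exact_mod_cast j.factorial_pos
  rw [Fc]
  positivity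

lemma Ac_nonneg {lam : ℝ} (hlam : 0 < lam) (k : ℕ) : 0 ≤ Ac lam k := by
  have h1 := Fc_pos hlam k
  have h2 := Fc_pos hlam (k-1)
  have h3 := Fc_pos hlam (k+1)
  have hf1 : (0:ℝ) < (((k-1).factorial : ℝ)) := by exact_mod_cast (k-1).factorial_pos
  have hf2 : (0:ℝ) < ((k.factorial : ℝ)) := by exact_mod_cast k.factorial_pos
  rw [Ac]
  positivity

lemma Ac'_nonneg {lam : ℝ} (hlam : 0 < lam) (k : ℕ) : 0 ≤ Ac' lam k := by
  have h1 := Fc_pos hlam k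
  have h3 := Fc_pos hlam (k+1)
  have hf2 : (0:ℝ) < ((k.factorial : ℝ)) := by exact_mod_cast k.factorial_pos
  rw [Ac']
  positivity

lemma pe {lam : ℝ} (hlam : 0 < lam) (j : ℕ) {u : ℝ} (hu : 0 ≤ u) :
    u^j * Real.exp (-lam*u) ≤ Fc lam j * Real.exp (-lam*u/2) := by
  have hfac : (0:ℝ) < (j.factorial : ℝ) := by exact_mod_cast j.factorial_pos
  have h1 : (lam*u/2)^j / (j.factorial:ℝ) ≤ Real.exp (lam*u/2) :=
    Real.pow_div_factorial_le_exp _ (by positivity) j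
  have h2 : u^j ≤ Fc lam j * Real.exp (lam*u/2) := by
    have hsplit : u^j = (lam*u/2)^j * (2/lam)^j := by
      rw [← mul_pow]
      congr 1
      field_simp
    rw [hsplit, Fc]
    have h3 : (lam*u/2)^j ≤ Real.exp (lam*u/2) * (j.factorial:ℝ) := by
      rw [div_le_iff₀ hfac] at h1
      linarith
    calc (lam*u/2)^j * (2/lam)^j
        ≤ (Real.exp (lam*u/2) * (j.factorial:ℝ)) * (2/lam)^j :=
          mul_le_mul_of_nonneg_right h3 (by positivity)
      _ = (j.factorial:ℝ) * (2/lam)^j * Real.exp (lam*u/2) := by ring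
  calc u^j * Real.exp (-lam*u)
      ≤ (Fc lam j * Real.exp (lam*u/2)) * Real.exp (-lam*u) :=
        mul_le_mul_of_nonneg_right h2 (Real.exp_pos _).le
    _ = Fc lam j * Real.exp (-lam*u/2) := by
        rw [mul_assoc, ← Real.exp_add]
        congr 2
        ring

lemma hker_bound {lam : ℝ} (hlam : 0 < lam) {k : ℕ} (hk : 1 ≤ k) {u : ℝ} (hu : 0 ≤ u) :
    |hker lam k u| * (u+3) ≤ Ac lam k * Real.exp (-lam*u/2) := by
  obtain ⟨j, rfl⟩ : ∃ j, k = j + 1 := ⟨k-1, (Nat.sub_add_cancel hk).symm⟩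
  set E := Real.exp (-lam*u) with hEdef
  set e2 := Real.exp (-lam*u/2) with he2def
  have hE0 : 0 < E := Real.exp_pos _
  have hf1 : (0:ℝ) < ((j.factorial : ℝ)) := by exact_mod_cast j.factorial_pos
  have hf2 : (0:ℝ) < (((j+1).factorial : ℝ)) := by exact_mod_cast (j+1).factorial_pos
  have p1 : u^(j+1) * E ≤ Fc lam (j+1) * e2 := pe hlam (j+1) hu
  have p2 : u^j * E ≤ Fc lam j * e2 := pe hlam j hu
  have p3 : u^(j+2) * E ≤ Fc lam (j+2) * e2 := pe hlam (j+2) hu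
  have habs : |hker lam (j+1) u| ≤ (u^j/((j.factorial:ℝ)) + lam*u^(j+1)/(((j+1).factorial:ℝ))) * E := by
    rw [hker]
    simp only [Nat.add_sub_cancel]
    rw [abs_mul, Real.abs_exp, ← hEdef]
    apply mul_le_mul_of_nonneg_right _ hE0.le
    have ha : (0:ℝ) ≤ u^j/((j.factorial:ℝ)) := by positivity
    have hb : (0:ℝ) ≤ lam*u^(j+1)/(((j+1).factorial:ℝ)) := by positivity
    calc |u^j/((j.factorial:ℝ)) - lam*u^(j+1)/(((j+1).factorial:ℝ))|
        ≤ |u^j/((j.factorial:ℝ))| + |lam*u^(j+1)/(((j+1).factorial:ℝ))| := abs_sub _ _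
      _ = u^j/((j.factorial:ℝ)) + lam*u^(j+1)/(((j+1).factorial:ℝ)) := by
          rw [abs_of_nonneg ha, abs_of_nonneg hb]
  have expand : ((u^j/((j.factorial:ℝ)) + lam*u^(j+1)/(((j+1).factorial:ℝ))) * E) * (u+3)
      = (u^(j+1)*E + 3*(u^j*E))/((j.factorial:ℝ))
        + lam*((u^(j+2)*E + 3*(u^(j+1)*E))/(((j+1).factorial:ℝ))) := by
    field_simp
    ring
  have g1 : u^(j+1)*E + 3*(u^j*E) ≤ Fc lam (j+1)*e2 + 3*(Fc lam j*e2) := by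
    have h3 : 3*(u^j*E) ≤ 3*(Fc lam j*e2) := by linarith
    linarith
  have g2 : u^(j+2)*E + 3*(u^(j+1)*E) ≤ Fc lam (j+2)*e2 + 3*(Fc lam (j+1)*e2) := by
    have h3 : 3*(u^(j+1)*E) ≤ 3*(Fc lam (j+1)*e2) := by linarith
    linarith
  have g3 : (u^(j+1)*E + 3*(u^j*E))/((j.factorial:ℝ))
      ≤ (Fc lam (j+1)*e2 + 3*(Fc lam j*e2))/((j.factorial:ℝ)) :=
    (div_le_div_iff_of_pos_right hf1).mpr g1
  have g4 : lam*((u^(j+2)*E + 3*(u^(j+1)*E))/(((j+1).factorial:ℝ)))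
      ≤ lam*((Fc lam (j+2)*e2 + 3*(Fc lam (j+1)*e2))/(((j+1).factorial:ℝ))) :=
    mul_le_mul_of_nonneg_left ((div_le_div_iff_of_pos_right hf2).mpr g2) hlam.le
  have hu3 : (0:ℝ) ≤ u + 3 := by linarith
  calc |hker lam (j+1) u| * (u+3)
      ≤ ((u^j/((j.factorial:ℝ)) + lam*u^(j+1)/(((j+1).factorial:ℝ))) * E) * (u+3) :=
        mul_le_mul_of_nonneg_right habs hu3
    _ = (u^(j+1)*E + 3*(u^j*E))/((j.factorial:ℝ))
        + lam*((u^(j+2)*E + 3*(u^(j+1)*E))/(((j+1).factorial:ℝ))) := expand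
    _ ≤ (Fc lam (j+1)*e2 + 3*(Fc lam j*e2))/((j.factorial:ℝ))
        + lam*((Fc lam (j+2)*e2 + 3*(Fc lam (j+1)*e2))/(((j+1).factorial:ℝ))) := by
        linarith
    _ = Ac lam (j+1) * e2 := by
        rw [Ac]
        simp only [Nat.add_sub_cancel]
        field_simp

lemma G_bound {lam : ℝ} (hlam : 0 < lam) (k : ℕ) {t : ℝ} (ht : 0 ≤ t) :
    (t^k * Real.exp (-lam*t) / ((k.factorial:ℝ))) * (t+3) ≤ Ac' lam k := by
  set E := Real.exp (-lam*t) with hEdef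
  set e2 := Real.exp (-lam*t/2) with he2def
  have he21 : e2 ≤ 1 := by
    rw [he2def]
    apply Real.exp_le_one_iff.mpr
    nlinarith
  have he20 : 0 < e2 := Real.exp_pos _
  have hf2 : (0:ℝ) < ((k.factorial : ℝ)) := by exact_mod_cast k.factorial_pos
  have p1 : t^(k+1) * E ≤ Fc lam (k+1) * e2 := pe hlam (k+1) ht
  have p2 : t^k * E ≤ Fc lam k * e2 := pe hlam k ht
  have hF1 := Fc_pos hlam (k+1)
  have hF2 := Fc_pos hlam k
  have expand : (t^k * E / ((k.factorial:ℝ))) * (t+3)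
      = (t^(k+1)*E + 3*(t^k*E))/((k.factorial:ℝ)) := by
    field_simp
    ring
  rw [expand, Ac']
  have g1 : t^(k+1)*E + 3*(t^k*E) ≤ Fc lam (k+1)*e2 + 3*(Fc lam k*e2) := by
    have h3 : 3*(t^k*E) ≤ 3*(Fc lam k*e2) := by linarith
    linarith
  have g2 : Fc lam (k+1)*e2 + 3*(Fc lam k*e2) ≤ Fc lam (k+1) + 3*Fc lam k := by
    nlinarith
  apply (div_le_div_iff_of_pos_right hf2).mpr
  linarith

lemma hker_cont (lam : ℝ) (k : ℕ) : Continuous (hker lam k) := by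
  unfold hker
  fun_prop

lemma G_deriv {lam : ℝ} {k : ℕ} (hk : 1 ≤ k) (u : ℝ) :
    HasDerivAt (fun y => y^k * Real.exp (-lam*y) / ((k.factorial:ℝ))) (hker lam k u) u := by
  obtain ⟨j, rfl⟩ : ∃ j, k = j + 1 := ⟨k-1, (Nat.sub_add_cancel hk).symm⟩
  have h1 : HasDerivAt (fun y : ℝ => -lam*y) (-lam) u := by
    simpa using (hasDerivAt_id u).const_mul (-lam)
  have h2 : HasDerivAt (fun y : ℝ => Real.exp (-lam*y)) (Real.exp (-lam*u) * (-lam)) u :=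
    (Real.hasDerivAt_exp (-lam*u)).comp u h1
  have h3 := ((hasDerivAt_pow (j+1) u).mul h2).div_const (((j+1).factorial:ℝ))
  refine h3.congr_deriv (Eq.symm ?_)
  rw [hker]
  simp only [Nat.add_sub_cancel]
  have hfs : (((j+1).factorial : ℝ)) = ((j:ℝ)+1) * ((j.factorial:ℝ)) := by
    rw [Nat.factorial_succ]
    push_cast
    ring
  have hf1 : ((j.factorial:ℝ)) ≠ 0 := by
    have : (0:ℝ) < ((j.factorial : ℝ)) := by exact_mod_cast j.factorial_pos
    linarith
  have hj1 : ((j:ℝ)+1) ≠ 0 := by positivity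
  rw [hfs]
  push_cast
  field_simp
  ring

lemma G_nonneg {lam : ℝ} (k : ℕ) {t : ℝ} (ht : 0 ≤ t) :
    0 ≤ t^k * Real.exp (-lam*t) / ((k.factorial:ℝ)) := by
  have hf2 : (0:ℝ) < ((k.factorial : ℝ)) := by exact_mod_cast k.factorial_pos
  positivity

lemma integral_hker {lam : ℝ} {k : ℕ} (hk : 1 ≤ k) {t : ℝ} (ht : 0 ≤ t) :
    ∫ u in (0:ℝ)..t, hker lam k u = t^k * Real.exp (-lam*t) / ((k.factorial:ℝ)) := by
  rw [intervalIntegral.integral_eq_sub_of_hasDerivAt (fun u _ => G_deriv hk u)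
    ((hker_cont lam k).intervalIntegrable _ _)]
  rw [zero_pow (by omega : k ≠ 0)]
  simp

lemma integral_exp_le {lam : ℝ} (hlam : 0 < lam) {t : ℝ} (ht : 0 ≤ t) :
    ∫ u in (0:ℝ)..t, Real.exp (-lam*u/2) ≤ 2/lam := by
  have hderiv : ∀ u ∈ Set.uIcc (0:ℝ) t,
      HasDerivAt (fun y => -(2/lam)*Real.exp (-lam*y/2)) (Real.exp (-lam*u/2)) u := by
    intro u _
    have h1 : HasDerivAt (fun y : ℝ => -lam*y/2) (-lam/2) u := by
      simpa using ((hasDerivAt_id u).const_mul (-lam)).div_const 2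
    have h2 : HasDerivAt (fun y : ℝ => Real.exp (-lam*y/2)) (Real.exp (-lam*u/2) * (-lam/2)) u :=
      h1.exp
    have h3 := h2.const_mul (-(2/lam))
    refine h3.congr_deriv (Eq.symm ?_)
    field_simp
  rw [intervalIntegral.integral_eq_sub_of_hasDerivAt hderiv
    ((by fun_prop : Continuous (fun u : ℝ => Real.exp (-lam*u/2))).intervalIntegrable _ _)]
  have he1 : Real.exp (-lam*0/2) = 1 := by norm_num
  have he2 : 0 < Real.exp (-lam*t/2) := Real.exp_pos _
  rw [he1]
  have : -(2/lam)*Real.exp (-lam*t/2) ≤ 0 := by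
    have h4 : 0 < 2/lam := by positivity
    nlinarith
  have h5 : 0 < 2/lam := by positivity
  linarith


/-! ### Deterministic main estimate -/

lemma main_det {B : ℝ → Ω → ℝ} (hB : IsStdBM1 B) {lam : ℝ} (hlam : 0 < lam) {k : ℕ} (hk : 1 ≤ k)
    {ω : Ω} {C : ℝ} (hC1 : 1 ≤ C)
    (hp : ∀ s t : ℝ, 0 ≤ s → s ≤ t → |B s ω - B t ω| ≤ C*(t-s+3)*Real.sqrt (Real.log (t+2)))
    {t : ℝ} (ht : 0 ≤ t) :
    |∫ s in (0:ℝ)..t, hker lam k (t-s) * B s ω| ≤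
      C * (2*Ac lam k/lam + Ac' lam k) * Real.sqrt (Real.log (t+2)) := by
  set R := Real.sqrt (Real.log (t+2)) with hRdef
  have hR0 : 0 ≤ R := Real.sqrt_nonneg _
  have hC0 : (0:ℝ) ≤ C := by linarith
  have hAc := Ac_nonneg hlam k
  have hAc' := Ac'_nonneg hlam k
  have hcB : Continuous fun s => B s ω := hB.cont ω
  have hc1 : Continuous fun s => hker lam k (t-s) :=
    (hker_cont lam k).comp (continuous_const.sub continuous_id)
  have hsplit : (∫ s in (0:ℝ)..t, hker lam k (t-s) * B s ω)
      = (∫ s in (0:ℝ)..t, hker lam k (t-s) * (B s ω - B t ω))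
        + (∫ s in (0:ℝ)..t, hker lam k (t-s)) * B t ω := by
    rw [← intervalIntegral.integral_mul_const]
    rw [← intervalIntegral.integral_add (f := fun s => hker lam k (t-s) * (B s ω - B t ω))
      (g := fun s => hker lam k (t-s) * B t ω)
      ((hc1.mul (hcB.sub continuous_const)).intervalIntegrable _ _)
      ((hc1.mul continuous_const).intervalIntegrable _ _)]
    apply intervalIntegral.integral_congr
    intro s _
    ring
  have hbound1 : |∫ s in (0:ℝ)..t, hker lam k (t-s) * (B s ω - B t ω)|
      ≤ C * R * (2 * Ac lam k / lam) := by
    calc |∫ s in (0:ℝ)..t, hker lam k (t-s) * (B s ω - B t ω)|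
        ≤ ∫ s in (0:ℝ)..t, |hker lam k (t-s) * (B s ω - B t ω)| :=
          intervalIntegral.abs_integral_le_integral_abs ht
      _ ≤ ∫ s in (0:ℝ)..t, (C*R*Ac lam k) * Real.exp (-lam*(t-s)/2) := by
          apply intervalIntegral.integral_mono_on ht
          · exact ((hc1.mul (hcB.sub continuous_const)).abs).intervalIntegrable _ _
          · exact Continuous.intervalIntegrable (by fun_prop) _ _
          · intro s hs
            obtain ⟨hs0, hst⟩ := hs
            have hu : 0 ≤ t - s := by linarith
            have h1 : |B s ω - B t ω| ≤ C*(t-s+3)*R := hp s t hs0 hst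
            have hq := hker_bound hlam hk hu
            have h2 : 0 ≤ |hker lam k (t-s)| := abs_nonneg _
            rw [abs_mul]
            calc |hker lam k (t-s)| * |B s ω - B t ω|
                ≤ |hker lam k (t-s)| * (C*(t-s+3)*R) := mul_le_mul_of_nonneg_left h1 h2
              _ = (C*R) * (|hker lam k (t-s)| * (t-s+3)) := by ring
              _ ≤ (C*R) * (Ac lam k * Real.exp (-lam*(t-s)/2)) := by
                  apply mul_le_mul_of_nonneg_left hq (mul_nonneg hC0 hR0)
              _ = (C*R*Ac lam k) * Real.exp (-lam*(t-s)/2) := by ring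
      _ = (C*R*Ac lam k) * ∫ s in (0:ℝ)..t, Real.exp (-lam*(t-s)/2) :=
          intervalIntegral.integral_const_mul _ _
      _ ≤ (C*R*Ac lam k) * (2/lam) := by
          have hsub : (∫ s in (0:ℝ)..t, Real.exp (-lam*(t-s)/2))
              = ∫ u in (0:ℝ)..t, Real.exp (-lam*u/2) := by
            have h5 := intervalIntegral.integral_comp_sub_left
              (fun u => Real.exp (-lam*u/2)) t (a := 0) (b := t)
            rw [sub_self, sub_zero] at h5
            exact h5
          rw [hsub]
          exact mul_le_mul_of_nonneg_left (integral_exp_le hlam ht)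
            (mul_nonneg (mul_nonneg hC0 hR0) hAc)
      _ = C * R * (2*Ac lam k/lam) := by ring
  have hbound2 : |(∫ s in (0:ℝ)..t, hker lam k (t-s)) * B t ω| ≤ C * R * Ac' lam k := by
    have hint : (∫ s in (0:ℝ)..t, hker lam k (t-s))
        = t^k * Real.exp (-lam*t)/((k.factorial:ℝ)) := by
      have h5 := intervalIntegral.integral_comp_sub_left (hker lam k) t (a := 0) (b := t)
      rw [sub_self, sub_zero] at h5
      rw [h5, integral_hker hk ht]
    rw [hint, abs_mul]
    have hG0 := G_nonneg (lam := lam) k ht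
    rw [abs_of_nonneg hG0]
    have hBt : |B t ω| ≤ C*(t+3)*R := by
      have h6 := hp 0 t le_rfl ht
      rw [hB.init ω, zero_sub, abs_neg] at h6
      have : t - 0 + 3 = t + 3 := by ring
      rwa [this] at h6
    have hGb := G_bound hlam k ht
    calc (t^k * Real.exp (-lam*t)/((k.factorial:ℝ))) * |B t ω|
        ≤ (t^k * Real.exp (-lam*t)/((k.factorial:ℝ))) * (C*(t+3)*R) :=
          mul_le_mul_of_nonneg_left hBt hG0
      _ = (C*R) * ((t^k * Real.exp (-lam*t)/((k.factorial:ℝ))) * (t+3)) := by ring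
      _ ≤ (C*R) * Ac' lam k := mul_le_mul_of_nonneg_left hGb (mul_nonneg hC0 hR0)
      _ = C * R * Ac' lam k := by ring
  calc |∫ s in (0:ℝ)..t, hker lam k (t-s) * B s ω|
      ≤ |∫ s in (0:ℝ)..t, hker lam k (t-s) * (B s ω - B t ω)|
        + |(∫ s in (0:ℝ)..t, hker lam k (t-s)) * B t ω| := by
        rw [hsplit]; exact abs_add_le _ _
    _ ≤ C*R*(2*Ac lam k/lam) + C*R*Ac' lam k := add_le_add hbound1 hbound2
    _ = C * (2*Ac lam k/lam + Ac' lam k) * R := by ring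

end BMaux

/-- For `g_k(u) = u^k e^{-λu}/k!` with `k ≥ 1`, the pathwise Wiener integral
`∫₀ᵗ g_k(t-s) dB_s = ∫₀ᵗ [(t-s)^(k-1)/(k-1)! - λ(t-s)^k/k!] e^{-λ(t-s)} B_s ds`
is `O(√(log t))` almost surely. -/
theorem stmt3 {Ω : Type*} [MeasureSpace Ω] [IsProbabilityMeasure (volume : Measure Ω)]
    (B : ℝ → Ω → ℝ) (hB : IsStdBM1 B) (lam : ℝ) (hlam : 0 < lam) (k : ℕ) (hk : 1 ≤ k) :
    ∀ᵐ ω ∂(volume : Measure Ω),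
      IsBoundedUnder (· ≤ ·) atTop (fun t : ℝ =>
        |∫ s in (0:ℝ)..t,
            ((t - s) ^ (k - 1) / (Nat.factorial (k - 1) : ℝ)
              - lam * (t - s) ^ k / (Nat.factorial k : ℝ))
              * Real.exp (-lam * (t - s)) * B s ω| /
          Real.sqrt (Real.log t)) := by
  filter_upwards [BMaux.unit_bound hB] with ω hω
  obtain ⟨C, hC1, hC⟩ := hω
  have hC0 : (0:ℝ) ≤ C := by linarith
  have hp : ∀ s t : ℝ, 0 ≤ s → s ≤ t →
      |B s ω - B t ω| ≤ C*(t-s+3)*Real.sqrt (Real.log (t+2)) :=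
    fun s t hs hst => BMaux.pair_bound hC1 hC hs hst
  set D := 2*BMaux.Ac lam k/lam + BMaux.Ac' lam k with hD
  have hD0 : 0 ≤ D := by
    have h1 := BMaux.Ac_nonneg hlam k
    have h2 := BMaux.Ac'_nonneg hlam k
    have h3 : 0 ≤ 2*BMaux.Ac lam k/lam := by positivity
    rw [hD]
    linarith
  apply isBoundedUnder_of_eventually_le (a := C * D * 2)
  filter_upwards [eventually_ge_atTop (2:ℝ)] with t ht2
  have ht0 : (0:ℝ) ≤ t := by linarith
  have hmain := BMaux.main_det hB hlam hk hC1 hp ht0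
  have hintegrand : (∫ s in (0:ℝ)..t,
        ((t - s) ^ (k - 1) / (Nat.factorial (k - 1) : ℝ)
          - lam * (t - s) ^ k / (Nat.factorial k : ℝ))
          * Real.exp (-lam * (t - s)) * B s ω)
      = ∫ s in (0:ℝ)..t, BMaux.hker lam k (t-s) * B s ω := by
    apply intervalIntegral.integral_congr
    intro s _
    simp only [BMaux.hker]
  rw [hintegrand]
  have hlogt : 0 < Real.log t := Real.log_pos (by linarith)
  have hsqrtpos : 0 < Real.sqrt (Real.log t) := Real.sqrt_pos.mpr hlogt
  have hsq : Real.sqrt (Real.log (t+2)) ≤ 2 * Real.sqrt (Real.log t) := by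
    have hle : Real.log (t+2) ≤ 2*Real.log t := by
      have h1 : t + 2 ≤ t^2 := by nlinarith
      have h2 : Real.log (t+2) ≤ Real.log (t^2) := Real.log_le_log (by linarith) h1
      rw [Real.log_pow] at h2
      push_cast at h2
      linarith
    calc Real.sqrt (Real.log (t+2)) ≤ Real.sqrt (2*Real.log t) := Real.sqrt_le_sqrt hle
      _ = Real.sqrt 2 * Real.sqrt (Real.log t) := Real.sqrt_mul (by norm_num) _
      _ ≤ 2 * Real.sqrt (Real.log t) := by
          have h2 : Real.sqrt 2 ≤ 2 := by
            nlinarith [Real.sq_sqrt (show (0:ℝ) ≤ 2 by norm_num), Real.sqrt_nonneg 2]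
          nlinarith [Real.sqrt_nonneg (Real.log t)]
  rw [div_le_iff₀ hsqrtpos]
  calc |∫ s in (0:ℝ)..t, BMaux.hker lam k (t-s) * B s ω|
      ≤ C * D * Real.sqrt (Real.log (t+2)) := hmain
    _ ≤ C * D * (2*Real.sqrt (Real.log t)) := by
        apply mul_le_mul_of_nonneg_left hsq (mul_nonneg hC0 hD0)
    _ = C * D * 2 * Real.sqrt (Real.log t) := by ring
end

section
/- Let A be a d×d real matrix all of whose eigenvalues have positive real part, and let D be a d×d real matrix. Then the function s ↦ e^{−sA}·(D·Dᵀ)·e^{−sAᵀ} is Bochner integrable on [0,∞), so that the matrix Σ := ∫₀^∞ e^{−sA}·(D·Dᵀ)·e^{−sAᵀ} ds is well defined (and is symmetric positive semidefinite). -/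
open MeasureTheory Filter NormedSpace Polynomial Matrix
open scoped ENNReal NNReal

section Aux

attribute [local instance] Matrix.linftyOpNormedRing Matrix.linftyOpNormedAlgebra

variable {d : ℕ}

lemma aux_entry_le (M : Matrix (Fin d) (Fin d) ℂ) (i j : Fin d) : ‖M i j‖ ≤ ‖M‖ := by
  have h : ‖M i j‖₊ ≤ ‖M‖₊ := by
    rw [Matrix.linfty_opNNNorm_def]
    refine le_trans ?_ (Finset.le_sup (Finset.mem_univ i))
    exact Finset.single_le_sum (f := fun k => ‖M i k‖₊) (fun k _ => zero_le) (Finset.mem_univ j)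
  exact_mod_cast h

lemma aux_eigenvector {M : Matrix (Fin d) (Fin d) ℂ} {μ : ℂ} (hμ : μ ∈ spectrum ℂ M) :
    ∃ v : Fin d → ℂ, v ≠ 0 ∧ M *ᵥ v = μ • v := by
  rw [spectrum.mem_iff, Matrix.isUnit_iff_isUnit_det, isUnit_iff_ne_zero, not_not] at hμ
  obtain ⟨v, hv, hv0⟩ := (Matrix.exists_mulVec_eq_zero_iff).2 hμ
  refine ⟨v, hv, ?_⟩
  rw [Matrix.sub_mulVec, sub_eq_zero] at hv0
  have halg : (algebraMap ℂ (Matrix (Fin d) (Fin d) ℂ)) μ *ᵥ v = μ • v := by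
    rw [Algebra.algebraMap_eq_smul_one, Matrix.smul_mulVec, Matrix.one_mulVec]
  rw [halg] at hv0
  exact hv0.symm

lemma aux_pow_mulVec {M : Matrix (Fin d) (Fin d) ℂ} {μ : ℂ} {v : Fin d → ℂ}
    (hv : M *ᵥ v = μ • v) (n : ℕ) : (M ^ n) *ᵥ v = (μ ^ n) • v := by
  induction n with
  | zero => simp
  | succ n ih =>
      rw [pow_succ, ← Matrix.mulVec_mulVec, hv, Matrix.mulVec_smul, ih, pow_succ,
        smul_smul, mul_comm]

noncomputable def auxL (v : Fin d → ℂ) : Matrix (Fin d) (Fin d) ℂ →ₗ[ℂ] (Fin d → ℂ) where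
  toFun := fun N => N *ᵥ v
  map_add' := fun N₁ N₂ => Matrix.add_mulVec N₁ N₂ v
  map_smul' := fun c N => Matrix.smul_mulVec c N v

lemma aux_aeval_mulVec {M : Matrix (Fin d) (Fin d) ℂ} {μ : ℂ} {v : Fin d → ℂ}
    (hv : M *ᵥ v = μ • v) (q : Polynomial ℂ) :
    (Polynomial.aeval M q) *ᵥ v = (q.eval μ) • v := by
  rw [Polynomial.aeval_eq_sum_range, Polynomial.eval_eq_sum_range]
  have := map_sum (auxL v) (fun i => q.coeff i • M ^ i) (Finset.range (q.natDegree + 1))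
  simp only [auxL, LinearMap.coe_mk, AddHom.coe_mk] at this
  rw [this, Finset.sum_smul]
  refine Finset.sum_congr rfl fun n _ => ?_
  rw [Matrix.smul_mulVec, aux_pow_mulVec hv, smul_smul]

lemma aux_exp_mulVec {M : Matrix (Fin d) (Fin d) ℂ} {μ : ℂ} {v : Fin d → ℂ}
    (hv : M *ᵥ v = μ • v) : (NormedSpace.exp M) *ᵥ v = (Complex.exp μ) • v := by
  classical
  let L := auxL v
  have hsum : Summable fun n : ℕ => (n.factorial⁻¹ : ℝ) • M ^ n :=
    NormedSpace.expSeries_summable' (𝕂 := ℝ) M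
  have h1 : (NormedSpace.exp M) *ᵥ v
      = ∑' n : ℕ, (n.factorial⁻¹ : ℝ) • (M ^ n *ᵥ v) := by
    rw [NormedSpace.exp_eq_tsum ℝ]
    have := (L.toContinuousLinearMap : _ →L[ℂ] _).map_tsum hsum
    simpa [L, auxL] using this
  rw [h1]
  have h2 : ∀ n : ℕ, (n.factorial⁻¹ : ℝ) • (M ^ n *ᵥ v)
      = ((n.factorial⁻¹ : ℂ) * μ ^ n) • v := by
    intro n
    rw [aux_pow_mulVec hv, ← Complex.coe_smul, smul_smul]
    norm_num
  simp_rw [h2]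
  rw [Summable.tsum_smul_const (NormedSpace.expSeries_summable' (𝕂 := ℂ) μ |>.congr ?hc)]
  · congr 1
    rw [Complex.exp_eq_exp_ℂ, NormedSpace.exp_eq_tsum ℂ]
    exact (tsum_congr fun n => by rw [smul_eq_mul]).symm
  · intro n; rw [smul_eq_mul]

lemma aux_exp_mem_adjoin (M : Matrix (Fin d) (Fin d) ℂ) :
    ∃ q : Polynomial ℂ, Polynomial.aeval M q = NormedSpace.exp M := by
  have hmem : NormedSpace.exp M ∈ Algebra.adjoin ℂ {M} := by
    have hsum : HasSum (fun n : ℕ => (n.factorial⁻¹ : ℝ) • M ^ n) (NormedSpace.exp M) :=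
      NormedSpace.exp_series_hasSum_exp' (𝕂 := ℝ) M
    have hclosed : IsClosed ((Subalgebra.toSubmodule (Algebra.adjoin ℂ {M}) : Submodule ℂ _) : Set (Matrix (Fin d) (Fin d) ℂ)) :=
      Submodule.closed_of_finiteDimensional _
    refine hclosed.mem_of_tendsto hsum (Filter.Eventually.of_forall fun t => ?_)
    refine Submodule.sum_mem _ fun n _ => ?_
    have hMn : M ^ n ∈ Algebra.adjoin ℂ {M} :=
      pow_mem (Algebra.subset_adjoin (Set.mem_singleton M)) n
    have : (n.factorial⁻¹ : ℝ) • M ^ n = ((n.factorial⁻¹ : ℝ) : ℂ) • M ^ n := by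
      rw [← Complex.coe_smul]
    rw [this]
    exact Submodule.smul_mem _ _ hMn
  rw [Algebra.adjoin_singleton_eq_range_aeval] at hmem
  obtain ⟨q, hq⟩ := hmem
  exact ⟨q, hq⟩

lemma aux_decay (hd : 0 < d) (B : Matrix (Fin d) (Fin d) ℂ)
    (hB : ∀ μ ∈ spectrum ℂ B, 0 < μ.re) :
    ∃ ε C : ℝ, 0 < ε ∧ 0 < C ∧ ∀ s : ℝ, 0 ≤ s → ∀ i j : Fin d,
      ‖NormedSpace.exp ((-s) • B) i j‖ ≤ C * Real.exp (-(ε * s)) := by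
  haveI : Nonempty (Fin d) := ⟨⟨0, hd⟩⟩
  haveI : Nontrivial (Matrix (Fin d) (Fin d) ℂ) := by
    refine ⟨0, 1, fun h => ?_⟩
    have := congrFun (congrFun h ⟨0, hd⟩) ⟨0, hd⟩
    simp [Matrix.one_apply] at this
  -- minimum of real part on the spectrum
  obtain ⟨μ0, hμ0, hmin⟩ := (spectrum.isCompact B).exists_isMinOn (spectrum.nonempty B)
    (Complex.continuous_re.continuousOn)
  set ε0 : ℝ := μ0.re with hε0def
  have hε0 : 0 < ε0 := hB μ0 hμ0
  set ε : ℝ := ε0 / 2 with hεdef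
  have hε : 0 < ε := by positivity
  set X : Matrix (Fin d) (Fin d) ℂ := NormedSpace.exp (-B) with hXdef
  -- spectral radius of X
  obtain ⟨q, hq⟩ := aux_exp_mem_adjoin (-B)
  have hspec : spectrum ℂ X = (fun k => q.eval k) '' spectrum ℂ (-B) := by
    rw [hXdef, ← hq]
    exact spectrum.map_polynomial_aeval_of_nonempty (-B) q (spectrum.nonempty _)
  have hnorm_spec : ∀ lam ∈ spectrum ℂ X, ‖lam‖ ≤ Real.exp (-ε0) := by
    rw [hspec]
    rintro _ ⟨μ, hμ, rfl⟩
    simp only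
    obtain ⟨v, hv, hvec⟩ := aux_eigenvector hμ
    have e1 := aux_aeval_mulVec hvec q
    rw [hq] at e1
    have e2 := aux_exp_mulVec hvec
    rw [e1] at e2
    have heval : q.eval μ = Complex.exp μ := by
      obtain ⟨i, hi⟩ := Function.ne_iff.mp hv
      have := congrFun e2 i
      simp only [Pi.smul_apply, smul_eq_mul, Pi.zero_apply] at this hi
      exact mul_right_cancel₀ hi this
    rw [heval, Complex.norm_exp]
    apply Real.exp_le_exp.mpr
    have hμB : -μ ∈ spectrum ℂ B := by
      rw [← spectrum.neg_eq] at hμ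
      simpa using Set.mem_neg.mp hμ
    have h2 : μ0.re ≤ (-μ).re := hmin hμB
    simp only [Complex.neg_re] at h2
    linarith
  have hρ : spectralRadius ℂ X ≤ ENNReal.ofReal (Real.exp (-ε0)) := by
    rw [spectralRadius]
    refine iSup₂_le fun k hk => ?_
    rw [← ENNReal.ofReal_coe_nnreal, coe_nnnorm]
    exact ENNReal.ofReal_le_ofReal (hnorm_spec k hk)
  -- Gelfand's formula
  set ρ : ℝ := Real.exp (-ε) with hρdef
  have hρpos : 0 < ρ := Real.exp_pos _
  have hρlt : spectralRadius ℂ X < ENNReal.ofReal ρ := by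
    refine lt_of_le_of_lt hρ ?_
    rw [ENNReal.ofReal_lt_ofReal_iff hρpos]
    apply Real.exp_lt_exp.mpr
    linarith
  have hg := spectrum.pow_nnnorm_pow_one_div_tendsto_nhds_spectralRadius X
  have hev : ∀ᶠ (n : ℕ) in atTop, (‖X ^ n‖₊ : ℝ≥0∞) ^ (1/(n:ℝ)) < ENNReal.ofReal ρ :=
    hg.eventually_lt_const hρlt
  obtain ⟨N, hN⟩ := eventually_atTop.mp hev
  set N1 : ℕ := max N 1 with hN1def
  have hXn : ∀ n : ℕ, N1 ≤ n → ‖X ^ n‖ ≤ ρ ^ n := by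
    intro n hn
    have hn1 : 1 ≤ n := le_trans (le_max_right N 1) hn
    have hnne : (n : ℝ) ≠ 0 := by positivity
    have h0 := hN n (le_trans (le_max_left N 1) hn)
    have h1 : ((‖X ^ n‖₊ : ℝ≥0∞) ^ (1/(n:ℝ))) ^ (n : ℝ) ≤ (ENNReal.ofReal ρ) ^ (n:ℝ) :=
      ENNReal.rpow_le_rpow h0.le (by positivity)
    rw [← ENNReal.rpow_mul, one_div, inv_mul_cancel₀ hnne, ENNReal.rpow_one,
      ENNReal.ofReal_rpow_of_pos hρpos, Real.rpow_natCast,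
      ← ENNReal.ofReal_coe_nnreal, coe_nnnorm] at h1
    exact (ENNReal.ofReal_le_ofReal_iff (by positivity)).mp h1
  -- bound of exp on [0,1]
  have hcont : Continuous fun t : ℝ => NormedSpace.exp ((-t) • B) :=
    NormedSpace.exp_continuous.comp ((continuous_id.neg).smul continuous_const)
  obtain ⟨K0, hK0⟩ := (isCompact_Icc (a := (0:ℝ)) (b := 1)).exists_bound_of_continuousOn
    hcont.continuousOn
  set K : ℝ := max K0 1 with hKdef
  have hK1 : 1 ≤ K := le_max_right _ _
  have hKpos : 0 < K := lt_of_lt_of_le one_pos hK1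
  set C1 : ℝ := 1 + ∑ m ∈ Finset.range (N1 + 1), ‖X ^ m‖ / ρ ^ m with hC1def
  have hsum0 : 0 ≤ ∑ m ∈ Finset.range (N1 + 1), ‖X ^ m‖ / ρ ^ m :=
    Finset.sum_nonneg fun m _ => by positivity
  have hC1 : 1 ≤ C1 := by simp only [hC1def]; linarith
  have hC1pos : 0 < C1 := lt_of_lt_of_le one_pos hC1
  have hpow : ∀ n : ℕ, ‖X ^ n‖ ≤ C1 * ρ ^ n := by
    intro n
    rcases le_or_gt n N1 with h | h
    · have h1 : ‖X ^ n‖ / ρ ^ n ≤ C1 := by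
        have := Finset.single_le_sum (f := fun m => ‖X ^ m‖ / ρ ^ m)
          (fun m _ => by positivity) (Finset.mem_range.mpr (Nat.lt_succ_of_le h))
        simp only [hC1def]
        linarith
      calc ‖X ^ n‖ = (‖X ^ n‖ / ρ ^ n) * ρ ^ n := by field_simp
      _ ≤ C1 * ρ ^ n := mul_le_mul_of_nonneg_right h1 (by positivity)
    · exact le_trans (hXn n h.le) (le_mul_of_one_le_left (by positivity) hC1)
  refine ⟨ε, C1 * K * Real.exp ε, hε, by positivity, fun s hs i j => ?_⟩
  set n : ℕ := ⌊s⌋₊ with hndef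
  set t : ℝ := s - n with htdef
  have hfl := Nat.floor_le hs
  have hfl2 := Nat.lt_floor_add_one s
  have ht0 : 0 ≤ t := by simp only [htdef, hndef]; linarith
  have ht1 : t ≤ 1 := by simp only [htdef, hndef]; linarith
  have hsplit : (-s) • B = ((-(n:ℝ)) • B) + ((-t) • B) := by
    rw [← add_smul]
    congr 1
    simp only [htdef]
    ring
  have hcomm : Commute ((-(n:ℝ)) • B) ((-t) • B) :=
    ((Commute.refl B).smul_left _).smul_right _
  have hnB : ((-(n:ℝ)) • B) = n • (-B) := by
    rw [← Nat.cast_smul_eq_nsmul ℝ n (-B), smul_neg, neg_smul]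
  have hsplit2 : NormedSpace.exp ((-s) • B) = X ^ n * NormedSpace.exp ((-t) • B) := by
    rw [hsplit, Matrix.exp_add_of_commute _ _ hcomm, hnB, Matrix.exp_nsmul]
  have hρn : ρ ^ n = Real.exp (-(ε * n)) := by
    rw [hρdef, ← Real.exp_nat_mul]
    congr 1
    ring
  have hkey : Real.exp (-(ε * n)) ≤ Real.exp ε * Real.exp (-(ε * s)) := by
    rw [← Real.exp_add]
    apply Real.exp_le_exp.mpr
    have hsn : s - (n:ℝ) ≤ 1 := ht1
    nlinarith [hε.le]
  calc ‖NormedSpace.exp ((-s) • B) i j‖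
      ≤ ‖NormedSpace.exp ((-s) • B)‖ := aux_entry_le _ i j
    _ ≤ ‖X ^ n‖ * ‖NormedSpace.exp ((-t) • B)‖ := by
        rw [hsplit2]; exact norm_mul_le _ _
    _ ≤ (C1 * ρ ^ n) * K := by
        exact mul_le_mul (hpow n) (le_trans (hK0 t ⟨ht0, ht1⟩) (le_max_left _ _))
          (norm_nonneg _) (by positivity)
    _ = C1 * K * Real.exp (-(ε * n)) := by rw [hρn]; ring
    _ ≤ C1 * K * (Real.exp ε * Real.exp (-(ε * s))) := by
        exact mul_le_mul_of_nonneg_left hkey (by positivity)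
    _ = C1 * K * Real.exp ε * Real.exp (-(ε * s)) := by ring

lemma aux_spectrum_transpose (M : Matrix (Fin d) (Fin d) ℂ) :
    spectrum ℂ Mᵀ = spectrum ℂ M := by
  ext μ
  simp only [spectrum.mem_iff, not_iff_not]
  have h : algebraMap ℂ (Matrix (Fin d) (Fin d) ℂ) μ - Mᵀ
      = (algebraMap ℂ (Matrix (Fin d) (Fin d) ℂ) μ - M)ᵀ := by
    rw [Matrix.transpose_sub, Algebra.algebraMap_eq_smul_one, Matrix.transpose_smul,
      Matrix.transpose_one]
  rw [h, Matrix.isUnit_iff_isUnit_det, Matrix.det_transpose, ← Matrix.isUnit_iff_isUnit_det]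

lemma aux_map_exp (A : Matrix (Fin d) (Fin d) ℝ) (s : ℝ) :
    (NormedSpace.exp ((-s) • A)).map Complex.ofReal
      = NormedSpace.exp ((-s) • (A.map Complex.ofReal)) := by
  classical
  let φ : Matrix (Fin d) (Fin d) ℝ →ₐ[ℝ] Matrix (Fin d) (Fin d) ℂ :=
    Complex.ofRealAm.mapMatrix
  have hφ : Continuous φ := by
    have : Continuous fun N : Matrix (Fin d) (Fin d) ℝ => N.map Complex.ofReal :=
      continuous_id.matrix_map Complex.continuous_ofReal
    exact this
  have := NormedSpace.map_exp φ hφ ((-s) • A)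
  have hφsmul : φ ((-s) • A) = (-s) • (A.map Complex.ofReal) := map_smul φ (-s) A
  rw [hφsmul] at this
  exact this

lemma aux_decay_real (hd : 0 < d) (A : Matrix (Fin d) (Fin d) ℝ)
    (hA : ∀ μ ∈ spectrum ℂ (A.map Complex.ofReal), 0 < μ.re) :
    ∃ ε C : ℝ, 0 < ε ∧ 0 < C ∧ ∀ s : ℝ, 0 ≤ s → ∀ i j : Fin d,
      |NormedSpace.exp ((-s) • A) i j| ≤ C * Real.exp (-(ε * s)) := by
  obtain ⟨ε, C, hε, hC, h⟩ := aux_decay hd (A.map Complex.ofReal) hA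
  refine ⟨ε, C, hε, hC, fun s hs i j => ?_⟩
  have h1 := h s hs i j
  rw [← aux_map_exp] at h1
  simpa [Matrix.map_apply, Complex.norm_real] using h1

lemma aux_exp_cont (A : Matrix (Fin d) (Fin d) ℝ) :
    Continuous fun s : ℝ => NormedSpace.exp ((-s) • A) :=
  NormedSpace.exp_continuous.comp ((continuous_id.neg).smul continuous_const)

end Aux

open MeasureTheory Filter

attribute [local instance] Matrix.normedAddCommGroup Matrix.normedSpace

instance matrixContinuousENorm {n : Type*} [Fintype n] :
    ContinuousENorm (Matrix n n ℝ) :=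
  SeminormedAddGroup.toContinuousENorm

/-- If all eigenvalues of `A` have positive real part, then
`s ↦ e^{-sA} (D Dᵀ) e^{-sAᵀ}` is Bochner integrable on `[0,∞)`, and the matrix
`Σ = ∫₀^∞ e^{-sA} (D Dᵀ) e^{-sAᵀ} ds` is symmetric positive semidefinite. -/
theorem stmt8 {d : ℕ} (A D : Matrix (Fin d) (Fin d) ℝ)
    (hA : ∀ μ ∈ spectrum ℂ (A.map Complex.ofReal), 0 < μ.re) :
    IntegrableOn
      (fun s : ℝ => NormedSpace.exp ((-s) • A) * (D * D.transpose) *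
        NormedSpace.exp ((-s) • A.transpose))
      (Set.Ioi 0) volume ∧
    (∫ s in Set.Ioi (0:ℝ), NormedSpace.exp ((-s) • A) * (D * D.transpose) *
        NormedSpace.exp ((-s) • A.transpose)).PosSemidef := by
  classical
  set f : ℝ → Matrix (Fin d) (Fin d) ℝ := fun s =>
    NormedSpace.exp ((-s) • A) * (D * D.transpose) * NormedSpace.exp ((-s) • A.transpose)
    with hfdef
  have hpt : ∀ s : ℝ, (f s).PosSemidef := by
    intro s
    have hT : NormedSpace.exp ((-s) • Aᵀ) = (NormedSpace.exp ((-s) • A))ᵀ := by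
      rw [← Matrix.transpose_smul, Matrix.exp_transpose]
    have hre : f s = (NormedSpace.exp ((-s) • A) * D) *
        (NormedSpace.exp ((-s) • A) * D)ᵀ := by
      simp only [hfdef, hT, Matrix.transpose_mul, Matrix.mul_assoc]
    rw [hre]
    have hps := Matrix.posSemidef_self_mul_conjTranspose (NormedSpace.exp ((-s) • A) * D)
    rwa [Matrix.conjTranspose_eq_transpose_of_trivial] at hps
  have hcont : Continuous f := by
    exact ((aux_exp_cont A).matrix_mul continuous_const).matrix_mul (aux_exp_cont Aᵀ)
  have hherm : ∀ s, (f s)ᵀ = f s := by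
    intro s
    have := (hpt s).1
    rwa [Matrix.IsHermitian, Matrix.conjTranspose_eq_transpose_of_trivial] at this
  rcases Nat.eq_zero_or_pos d with hd0 | hd
  · subst hd0
    haveI : Subsingleton (Matrix (Fin 0) (Fin 0) ℝ) := by
      constructor
      intro a b
      ext i j
      exact i.elim0
    have hf0 : f = fun _ => 0 := funext fun s => Subsingleton.elim _ _
    constructor
    · rw [hf0]
      exact ⟨aestronglyMeasurable_const, by simp [HasFiniteIntegral, enorm_eq_nnnorm]⟩
    · rw [Matrix.posSemidef_iff_dotProduct_mulVec]; constructor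
      · exact Subsingleton.elim _ _
      · intro x
        have hx : x = 0 := funext fun i => i.elim0
        simp [hx, dotProduct]
  · obtain ⟨ε₁, C₁, hε₁, hC₁, h₁⟩ := aux_decay_real hd A hA
    have hAT : ∀ μ ∈ spectrum ℂ (Aᵀ.map Complex.ofReal), 0 < μ.re := by
      intro μ hμ
      apply hA μ
      rwa [Matrix.transpose_map, aux_spectrum_transpose] at hμ
    obtain ⟨ε₂, C₂, hε₂, hC₂, h₂⟩ := aux_decay_real hd Aᵀ hAT
    set mM : ℝ := ‖D * Dᵀ‖ with hmM
    have hmM0 : 0 ≤ mM := norm_nonneg _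
    set c : ℝ := (d * d) * (C₁ * mM * C₂) with hc
    have hbound : ∀ s : ℝ, 0 ≤ s → ‖f s‖ ≤ c * Real.exp (-(ε₁ + ε₂) * s) := by
      intro s hs
      have hcnn : (0:ℝ) ≤ c * Real.exp (-(ε₁ + ε₂) * s) := by positivity
      rw [Matrix.norm_le_iff hcnn]
      intro i j
      set E := NormedSpace.exp ((-s) • A) with hE
      set F := NormedSpace.exp ((-s) • Aᵀ) with hF
      set e₁ : ℝ := Real.exp (-(ε₁ * s)) with he₁
      set e₂ : ℝ := Real.exp (-(ε₂ * s)) with he₂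
      have he₁0 : 0 < e₁ := Real.exp_pos _
      have he₂0 : 0 < e₂ := Real.exp_pos _
      have hEb : ∀ l, |E i l| ≤ C₁ * e₁ := fun l => h₁ s hs i l
      have hFb : ∀ k, |F k j| ≤ C₂ * e₂ := fun k => h₂ s hs k j
      have hMb : ∀ l k, |(D * Dᵀ) l k| ≤ mM := fun l k => by
        have := Matrix.norm_entry_le_entrywise_sup_norm (D * Dᵀ) (i := l) (j := k)
        rwa [Real.norm_eq_abs] at this
      have hinner : ∀ k, |(E * (D * Dᵀ)) i k| ≤ (d : ℝ) * (C₁ * e₁ * mM) := by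
        intro k
        rw [Matrix.mul_apply]
        refine le_trans (Finset.abs_sum_le_sum_abs _ _) ?_
        have : ∀ l ∈ Finset.univ, |E i l * (D * Dᵀ) l k| ≤ C₁ * e₁ * mM := by
          intro l _
          rw [abs_mul]
          exact mul_le_mul (hEb l) (hMb l k) (abs_nonneg _) (by positivity)
        refine le_trans (Finset.sum_le_sum this) ?_
        rw [Finset.sum_const, Finset.card_univ, Fintype.card_fin, nsmul_eq_mul]
      have key : ‖f s i j‖ ≤ (d:ℝ) * (((d : ℝ) * (C₁ * e₁ * mM)) * (C₂ * e₂)) := by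
        rw [Real.norm_eq_abs]
        have hfsij : f s i j = ∑ k, (E * (D * Dᵀ)) i k * F k j := by
          simp only [hfdef, ← hE, ← hF]
          rw [Matrix.mul_apply]
        rw [hfsij]
        refine le_trans (Finset.abs_sum_le_sum_abs _ _) ?_
        have : ∀ k ∈ Finset.univ, |(E * (D * Dᵀ)) i k * F k j|
            ≤ ((d : ℝ) * (C₁ * e₁ * mM)) * (C₂ * e₂) := by
          intro k _
          rw [abs_mul]
          exact mul_le_mul (hinner k) (hFb k) (abs_nonneg _) (by positivity)
        refine le_trans (Finset.sum_le_sum this) ?_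
        rw [Finset.sum_const, Finset.card_univ, Fintype.card_fin, nsmul_eq_mul]
      refine le_trans key (le_of_eq ?_)
      have hee : e₁ * e₂ = Real.exp (-(ε₁ + ε₂) * s) := by
        rw [he₁, he₂, ← Real.exp_add]
        congr 1
        ring
      rw [hc, ← hee]
      ring
    have hg : IntegrableOn (fun s => c * Real.exp (-(ε₁ + ε₂) * s)) (Set.Ioi 0) volume :=
      (exp_neg_integrableOn_Ioi 0 (add_pos hε₁ hε₂)).const_mul c
    have hint : IntegrableOn f (Set.Ioi 0) volume := by
      haveI : TopologicalSpace.PseudoMetrizableSpace (Matrix (Fin d) (Fin d) ℝ) :=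
        inferInstanceAs (TopologicalSpace.PseudoMetrizableSpace (Fin d → Fin d → ℝ))
      refine Integrable.mono' hg hcont.aestronglyMeasurable ?_
      filter_upwards [self_mem_ae_restrict measurableSet_Ioi] with s hs
      exact hbound s (le_of_lt hs)
    refine ⟨hint, Matrix.posSemidef_iff_dotProduct_mulVec.mpr ⟨?_, ?_⟩⟩
    · -- Hermitian
      let Tl : Matrix (Fin d) (Fin d) ℝ →ₗ[ℝ] Matrix (Fin d) (Fin d) ℝ :=
        { toFun := Matrix.transpose
          map_add' := Matrix.transpose_add
          map_smul' := Matrix.transpose_smul }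
      have hTint := ContinuousLinearMap.integral_comp_comm Tl.toContinuousLinearMap hint
      rw [Matrix.IsHermitian, Matrix.conjTranspose_eq_transpose_of_trivial]
      have h1 : (∫ s in Set.Ioi (0:ℝ), f s)ᵀ
          = Tl.toContinuousLinearMap (∫ s in Set.Ioi (0:ℝ), f s) := rfl
      rw [h1]; refine hTint.symm.trans ?_
      simp only [LinearMap.coe_toContinuousLinearMap', LinearMap.coe_mk, AddHom.coe_mk, Tl]
      exact integral_congr_ae (Filter.Eventually.of_forall fun s => hherm s)
    · intro x
      let Lq : Matrix (Fin d) (Fin d) ℝ →ₗ[ℝ] ℝ :=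
        { toFun := fun N => dotProduct (star x) (N *ᵥ x)
          map_add' := fun N₁ N₂ => by
            simp [Matrix.add_mulVec, dotProduct_add]
          map_smul' := fun r N => by
            simp [Matrix.smul_mulVec, dotProduct_smul] }
      have hLq := ContinuousLinearMap.integral_comp_comm Lq.toContinuousLinearMap hint
      have h2 : dotProduct (star x) ((∫ s in Set.Ioi (0:ℝ), f s) *ᵥ x)
          = Lq.toContinuousLinearMap (∫ s in Set.Ioi (0:ℝ), f s) := rfl
      rw [h2]; refine le_of_le_of_eq ?_ hLq
      refine integral_nonneg fun s => ?_
      exact (Matrix.posSemidef_iff_dotProduct_mulVec.mp (hpt s)).2 x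
end

section
/- Let 0 < ε₀ < λ₀, let f : [0,∞) → [0,∞) be nondecreasing, and let u : [0,∞) → [0,∞) be a continuous function satisfying u(t) ≤ f(t) + ε₀ ∫₀ᵗ e^{−λ₀(t−s)} u(s) ds for all t ≥ 0. Then u(t) ≤ (λ₀/(λ₀ − ε₀))·f(t) for all t ≥ 0. -/
open MeasureTheory

lemma exp_int_le (lam0 : ℝ) (hl : 0 < lam0) (t : ℝ) (ht : 0 ≤ t) :
    ∫ s in (0:ℝ)..t, Real.exp (-lam0 * (t - s)) ≤ 1 / lam0 := by
  have hderiv : ∀ s ∈ Set.uIcc (0:ℝ) t,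
      HasDerivAt (fun s => Real.exp (-lam0 * (t - s)) / lam0)
        (Real.exp (-lam0 * (t - s))) s := by
    intro s _
    have hg : HasDerivAt (fun s : ℝ => -lam0 * (t - s)) lam0 s := by
      simpa using (((hasDerivAt_id s).const_sub t).const_mul (-lam0))
    have := (hg.exp).div_const lam0
    simpa [mul_div_assoc, mul_div_cancel_right₀ _ (ne_of_gt hl)] using this
  have hint : IntervalIntegrable (fun s => Real.exp (-lam0 * (t - s))) volume 0 t :=
    (Continuous.intervalIntegrable (by continuity) 0 t)
  have heq := intervalIntegral.integral_eq_sub_of_hasDerivAt hderiv hint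
  rw [heq]
  have h1 : Real.exp (-lam0 * (t - t)) = 1 := by simp
  have h2 : 0 < Real.exp (-lam0 * (t - 0)) := Real.exp_pos _
  rw [h1]
  linarith [div_pos h2 hl]

/-- Gronwall-type bound: if `u(t) ≤ f(t) + ε₀ ∫₀ᵗ e^{-λ₀(t-s)} u(s) ds` with
`0 < ε₀ < λ₀`, `f` nonnegative nondecreasing and `u` continuous nonnegative, then
`u(t) ≤ (λ₀/(λ₀-ε₀)) f(t)` for all `t ≥ 0`. -/
theorem stmt11 (eps0 lam0 : ℝ) (heps0 : 0 < eps0) (hlt : eps0 < lam0)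
    (f : ℝ → ℝ) (hf0 : ∀ t : ℝ, 0 ≤ t → 0 ≤ f t) (hfmono : MonotoneOn f (Set.Ici 0))
    (u : ℝ → ℝ) (hu0 : ∀ t : ℝ, 0 ≤ t → 0 ≤ u t) (hucont : ContinuousOn u (Set.Ici 0))
    (hineq : ∀ t : ℝ, 0 ≤ t →
      u t ≤ f t + eps0 * ∫ s in (0:ℝ)..t, Real.exp (-lam0 * (t - s)) * u s) :
    ∀ t : ℝ, 0 ≤ t → u t ≤ lam0 / (lam0 - eps0) * f t := by
  intro T hT
  have hl : 0 < lam0 := heps0.trans hlt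
  -- maximum of u on [0, T]
  obtain ⟨t₀, ht₀mem, hmax⟩ :=
    isCompact_Icc.exists_isMaxOn (Set.nonempty_Icc.2 hT)
      (hucont.mono (fun x hx => hx.1))
  obtain ⟨ht₀0, ht₀T⟩ := ht₀mem
  set M := u t₀ with hM
  have hineq' := hineq t₀ ht₀0
  -- bound the integral
  have hintu : IntervalIntegrable (fun s => Real.exp (-lam0 * (t₀ - s)) * u s) volume 0 t₀ := by
    apply ContinuousOn.intervalIntegrable
    apply ContinuousOn.mul
    · exact (Continuous.continuousOn (by continuity))
    · exact hucont.mono (by rw [Set.uIcc_of_le ht₀0]; exact fun x hx => hx.1)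
  have hintM : IntervalIntegrable (fun s => Real.exp (-lam0 * (t₀ - s)) * M) volume 0 t₀ :=
    (Continuous.intervalIntegrable (by continuity) 0 t₀)
  have hIle : (∫ s in (0:ℝ)..t₀, Real.exp (-lam0 * (t₀ - s)) * u s)
      ≤ ∫ s in (0:ℝ)..t₀, Real.exp (-lam0 * (t₀ - s)) * M := by
    apply intervalIntegral.integral_mono_on ht₀0 hintu hintM
    intro s hs
    exact mul_le_mul_of_nonneg_left
      (hmax ⟨hs.1, hs.2.trans ht₀T⟩) (Real.exp_pos _).le
  have hI2 : (∫ s in (0:ℝ)..t₀, Real.exp (-lam0 * (t₀ - s)) * M)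
      = (∫ s in (0:ℝ)..t₀, Real.exp (-lam0 * (t₀ - s))) * M := by
    rw [← intervalIntegral.integral_mul_const]
  have hM0 : 0 ≤ M := hu0 t₀ ht₀0
  have hIle2 : (∫ s in (0:ℝ)..t₀, Real.exp (-lam0 * (t₀ - s))) * M ≤ (1 / lam0) * M :=
    mul_le_mul_of_nonneg_right (exp_int_le lam0 hl t₀ ht₀0) hM0
  have hfle : f t₀ ≤ f T := hfmono ht₀0 hT ht₀T
  have hMle : M ≤ f T + eps0 * ((1 / lam0) * M) := by
    calc M ≤ f t₀ + eps0 * ∫ s in (0:ℝ)..t₀, Real.exp (-lam0 * (t₀ - s)) * u s := hineq'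
    _ ≤ f T + eps0 * ((1 / lam0) * M) := by
        have : (∫ s in (0:ℝ)..t₀, Real.exp (-lam0 * (t₀ - s)) * u s) ≤ (1 / lam0) * M := by
          calc _ ≤ _ := hIle
          _ = _ := hI2
          _ ≤ _ := hIle2
        nlinarith
  -- solve for M
  have hMbound : M ≤ lam0 / (lam0 - eps0) * f T := by
    have hpos : 0 < lam0 - eps0 := by linarith
    rw [div_mul_eq_mul_div, le_div_iff₀ hpos]
    have h1 : M * lam0 ≤ f T * lam0 + eps0 * M := by
      have := mul_le_mul_of_nonneg_right hMle hl.le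
      field_simp at this
      nlinarith
    nlinarith
  exact (hmax ⟨hT, le_refl T⟩).trans hMbound
end

section
/- Let 0 < ε₀ < λ₀, let f : [0,∞) → [0,∞) be nondecreasing, and let u : [0,∞) → [0,∞) be a continuous function satisfying u(t) ≤ f(t) + ε₀ ∫₀ᵗ e^{−λ₀(t−s)} u(s) ds for all t ≥ 0. Then the function φ(t) := ∫₀ᵗ e^{λ₀ s} u(s) ds satisfies φ(t) ≤ e^{ε₀ t} ∫₀ᵗ f(s) e^{(λ₀−ε₀)s} ds for all t ≥ 0. -/
open MeasureTheory

/-- Under the Gronwall-type hypothesis, `φ(t) := ∫₀ᵗ e^{λ₀ s} u(s) ds` satisfies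
`φ(t) ≤ e^{ε₀ t} ∫₀ᵗ f(s) e^{(λ₀-ε₀)s} ds` for all `t ≥ 0`. -/
theorem stmt12 (eps0 lam0 : ℝ) (heps0 : 0 < eps0) (hlt : eps0 < lam0)
    (f : ℝ → ℝ) (hf0 : ∀ t : ℝ, 0 ≤ t → 0 ≤ f t) (hfmono : MonotoneOn f (Set.Ici 0))
    (u : ℝ → ℝ) (hu0 : ∀ t : ℝ, 0 ≤ t → 0 ≤ u t) (hucont : ContinuousOn u (Set.Ici 0))
    (hineq : ∀ t : ℝ, 0 ≤ t →
      u t ≤ f t + eps0 * ∫ s in (0:ℝ)..t, Real.exp (-lam0 * (t - s)) * u s) :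
    ∀ t : ℝ, 0 ≤ t →
      (∫ s in (0:ℝ)..t, Real.exp (lam0 * s) * u s) ≤
        Real.exp (eps0 * t) * ∫ s in (0:ℝ)..t, f s * Real.exp ((lam0 - eps0) * s) := by
  intro t ht
  set v : ℝ → ℝ := fun s => u (max s 0) with hv
  have hvcont : Continuous v :=
    hucont.comp_continuous (continuous_id.max continuous_const) fun x => Set.mem_Ici.2 (le_max_right _ _)
  have hveq : ∀ s, 0 ≤ s → v s = u s := fun s hs => by simp [hv, max_eq_left hs]
  set g : ℝ → ℝ := fun s => Real.exp (lam0 * s) * v s with hg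
  have hgcont : Continuous g :=
    (Real.continuous_exp.comp (continuous_const.mul continuous_id)).mul hvcont
  set φ : ℝ → ℝ := fun x => ∫ s in (0:ℝ)..x, g s with hφ
  have hφd : ∀ x : ℝ, HasDerivAt φ (g x) x := by
    intro x
    exact intervalIntegral.integral_hasDerivAt_right (hgcont.intervalIntegrable 0 x)
      (hgcont.stronglyMeasurableAtFilter _ _) hgcont.continuousAt
  have hφcont : Continuous φ := by
    apply continuous_iff_continuousAt.2
    exact fun x => (hφd x).continuousAt
  -- ψ and its derivative
  have hψd : ∀ x : ℝ, HasDerivAt (fun y => Real.exp (-eps0 * y) * φ y)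
      (Real.exp (-eps0 * x) * (g x - eps0 * φ x)) x := by
    intro x
    have h1 : HasDerivAt (fun y : ℝ => Real.exp (-eps0 * y)) (Real.exp (-eps0 * x) * (-eps0)) x := by
      simpa using ((hasDerivAt_id x).const_mul (-eps0)).exp
    have h2 : HasDerivAt (fun y => Real.exp (-eps0 * y) * φ y)
        (Real.exp (-eps0 * x) * -eps0 * φ x + Real.exp (-eps0 * x) * g x) x := h1.fun_mul (hφd x)
    convert h2 using 1
    ring
  have hψ'cont : Continuous fun x => Real.exp (-eps0 * x) * (g x - eps0 * φ x) := by
    exact (Real.continuous_exp.comp (continuous_const.mul continuous_id)).mul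
      (hgcont.sub (continuous_const.mul hφcont))
  -- φ agrees with integral of u on [0,∞)
  have hφeq : ∀ s : ℝ, 0 ≤ s → φ s = ∫ r in (0:ℝ)..s, Real.exp (lam0 * r) * u r := by
    intro s hs
    apply intervalIntegral.integral_congr
    intro r hr
    rw [Set.uIcc_of_le hs] at hr
    simp [hg, hveq r hr.1]
  -- pointwise derivative bound
  have key : ∀ s ∈ Set.Icc (0:ℝ) t,
      Real.exp (-eps0 * s) * (g s - eps0 * φ s) ≤ f s * Real.exp ((lam0 - eps0) * s) := by
    intro s hs
    have hs0 := hs.1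
    have h1 := hineq s hs0
    have hint : (∫ r in (0:ℝ)..s, Real.exp (-lam0 * (s - r)) * u r)
        = Real.exp (-lam0 * s) * φ s := by
      rw [hφeq s hs0, ← intervalIntegral.integral_const_mul]
      apply intervalIntegral.integral_congr
      intro r _
      show Real.exp (-lam0 * (s - r)) * u r = Real.exp (-lam0 * s) * (Real.exp (lam0 * r) * u r)
      rw [← mul_assoc, ← Real.exp_add]
      ring_nf
    rw [hint] at h1
    have hgs : g s = Real.exp (lam0 * s) * u s := by simp [hg, hveq s hs0]
    have hmul : Real.exp (lam0 * s) * Real.exp (-lam0 * s) = 1 := by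
      rw [← Real.exp_add]; ring_nf; exact Real.exp_zero
    have h2 : g s - eps0 * φ s ≤ Real.exp (lam0 * s) * f s := by
      rw [hgs]
      have h3 := mul_le_mul_of_nonneg_left h1 (Real.exp_pos (lam0 * s)).le
      have h4 : Real.exp (lam0 * s) * (Real.exp (-lam0 * s) * φ s) = φ s := by
        rw [← mul_assoc, hmul, one_mul]
      have h5 : Real.exp (lam0 * s) * (f s + eps0 * (Real.exp (-lam0 * s) * φ s))
          = Real.exp (lam0 * s) * f s + eps0 * φ s := by
        rw [mul_add]
        congr 1
        rw [mul_left_comm, h4]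
      rw [h5] at h3
      linarith
    calc Real.exp (-eps0 * s) * (g s - eps0 * φ s)
        ≤ Real.exp (-eps0 * s) * (Real.exp (lam0 * s) * f s) :=
          mul_le_mul_of_nonneg_left h2 (Real.exp_pos _).le
      _ = f s * Real.exp ((lam0 - eps0) * s) := by
          rw [← mul_assoc, ← Real.exp_add]; ring_nf
  -- FTC for ψ on [0, t]
  have hftc : Real.exp (-eps0 * t) * φ t
      = ∫ s in (0:ℝ)..t, Real.exp (-eps0 * s) * (g s - eps0 * φ s) := by
    have := intervalIntegral.integral_eq_sub_of_hasDerivAt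
      (f := fun y => Real.exp (-eps0 * y) * φ y)
      (fun x _ => hψd x) (hψ'cont.intervalIntegrable 0 t)
    have hφ0 : φ 0 = 0 := by simp only [hφ]; exact intervalIntegral.integral_same
    rw [this]
    simp [hφ0]
  -- integrability of RHS
  have hfint : IntervalIntegrable (fun s => f s * Real.exp ((lam0 - eps0) * s)) volume 0 t := by
    have hfI : IntervalIntegrable f volume 0 t := by
      apply MonotoneOn.intervalIntegrable
      intro a ha b hb hab
      rw [Set.uIcc_of_le ht] at ha hb
      exact hfmono ha.1 hb.1 hab
    exact hfI.mul_continuousOn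
      ((Real.continuous_exp.comp (continuous_const.mul continuous_id)).continuousOn)
  have hmono : (∫ s in (0:ℝ)..t, Real.exp (-eps0 * s) * (g s - eps0 * φ s))
      ≤ ∫ s in (0:ℝ)..t, f s * Real.exp ((lam0 - eps0) * s) := by
    apply intervalIntegral.integral_mono_on ht (hψ'cont.intervalIntegrable 0 t) hfint
    exact key
  -- combine
  have hfinal : φ t ≤ Real.exp (eps0 * t) * ∫ s in (0:ℝ)..t, f s * Real.exp ((lam0 - eps0) * s) := by
    have h := hftc.trans_le hmono
    have := mul_le_mul_of_nonneg_left h (le_of_lt (Real.exp_pos (eps0 * t)))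
    have hmul : Real.exp (eps0 * t) * Real.exp (-eps0 * t) = 1 := by
      rw [← Real.exp_add]; ring_nf; exact Real.exp_zero
    rw [← mul_assoc, hmul, one_mul] at this
    exact this
  rw [← hφeq t ht]
  exact hfinal
end
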